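/- arXiv:1103.3442 — 5 statements merged into one kernel-verified Lean document; each statement's English description precedes it below -/
import Mathlib

section
/- For every p > 0, as A → 0⁺, I(A) ~ (2B/3)·A^{−3/(2p)}; that is, lim_{A→0⁺} A^{3/(2p)} I(A) = 2B/3, where B = Σ_{m=1}^∞ m^{−3} (so 1.2020 < B < 1.2022). -/
open Filter Topology

/-- The index set `Γ = {(j,l) : j,l ∈ ℤ₊}`. -/
abbrev Idx : Type := ℕ × ℕ

noncomputable section

/-- The sequence `a_ν = ((j+1)(l+1))^p` for `ν = (j,l)`. -/
def aT (p : ℝ) (ν : Idx) : ℝ := (((ν.1 : ℝ) + 1) * ((ν.2 : ℝ) + 1)) ^ p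

/-- The sequence `σ_ν = (j+l+1)^{1/2}` for `ν = (j,l)`. -/
def sigT (ν : Idx) : ℝ := ((ν.1 : ℝ) + (ν.2 : ℝ) + 1) ^ ((1 : ℝ) / 2)

/-- The constant `B = Σ_{m=1}^∞ m^{−3}`. -/
def Bsum : ℝ := ∑' m : ℕ, 1 / ((m : ℝ) + 1) ^ 3

/-- `I(A) = Σ_{ν ∈ Γ : A a_ν² ≤ 1} σ_ν⁴ = Σ_{(m,n) : (mn)^{2p} ≤ A⁻¹} (m+n−1)²`. -/
def Ifun (p A : ℝ) : ℝ :=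
  ∑' ν : Idx, if A * aT p ν ^ 2 ≤ 1 then sigT ν ^ 4 else 0

end

noncomputable section AuxDefs

/-- floor of x/(m+1) -/
def Km (m : ℕ) (x : ℝ) : ℕ := ⌊x / ((m : ℝ) + 1)⌋₊

def cK (K : ℕ) : ℝ := (K : ℝ) * (K + 1) * (2 * K + 1) / 6

lemma cK_nonneg (K : ℕ) : 0 ≤ cK K := by
  unfold cK; positivity

lemma sum_sq_eq (K : ℕ) : ∑ n ∈ Finset.range K, ((n : ℝ) + 1) ^ 2 = cK K := by
  induction K with
  | zero => simp [cK]
  | succ k ih =>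
    rw [Finset.sum_range_succ, ih]
    unfold cK; push_cast; ring

def Pset (x : ℝ) : Finset (ℕ × ℕ) :=
  (Finset.range ⌈x⌉₊ ×ˢ Finset.range ⌈x⌉₊).filter
    (fun ν => ((ν.1 : ℝ) + 1) * ((ν.2 : ℝ) + 1) ≤ x)

lemma mem_Pset {x : ℝ} {ν : ℕ × ℕ} :
    ν ∈ Pset x ↔ ((ν.1 : ℝ) + 1) * ((ν.2 : ℝ) + 1) ≤ x := by
  simp only [Pset, Finset.mem_filter, Finset.mem_product, Finset.mem_range, Nat.lt_ceil]
  refine ⟨fun h => h.2, fun h => ⟨⟨?_, ?_⟩, h⟩⟩ <;>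
    · have h1 : (0:ℝ) ≤ (ν.1 : ℝ) := Nat.cast_nonneg _
      have h2 : (0:ℝ) ≤ (ν.2 : ℝ) := Nat.cast_nonneg _
      nlinarith

def Sfun (x : ℝ) : ℝ := ∑ ν ∈ Pset x, ((ν.1 : ℝ) + (ν.2 : ℝ) + 1) ^ 2

def S1 (x : ℝ) : ℝ := ∑ ν ∈ Pset x, ((ν.2 : ℝ) + 1) ^ 2

lemma filter_inner_eq (m : ℕ) (x : ℝ) :
    (Finset.range ⌈x⌉₊).filter (fun n : ℕ => ((m : ℝ) + 1) * ((n : ℝ) + 1) ≤ x)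
      = Finset.range (Km m x) := by
  ext n
  simp only [Finset.mem_filter, Finset.mem_range, Nat.lt_ceil]
  constructor
  · rintro ⟨-, h⟩
    have hm : (0:ℝ) < (m:ℝ) + 1 := by positivity
    have hx : 0 ≤ x := le_trans (by positivity) h
    have : ((n:ℝ) + 1) ≤ x / ((m:ℝ) + 1) := (le_div_iff₀ hm).2 (by linarith [h, mul_comm ((m:ℝ)+1) ((n:ℝ)+1)])
    have : (n + 1 : ℕ) ≤ Km m x := Nat.le_floor (by push_cast; linarith)
    omega
  · intro h
    have h1 : (n + 1 : ℕ) ≤ Km m x := h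
    have hm : (0:ℝ) < (m:ℝ) + 1 := by positivity
    by_cases hx : 0 ≤ x
    · have h2 : ((n:ℝ) + 1) ≤ x / ((m:ℝ) + 1) := by
        have := Nat.le_floor_iff (by positivity : (0:ℝ) ≤ x / ((m:ℝ)+1)) |>.1 h1
        push_cast at this; linarith
      have h3 : ((m:ℝ) + 1) * ((n:ℝ) + 1) ≤ x := by
        rw [mul_comm]; exact (le_div_iff₀ hm).1 h2
      have h4 : (n:ℝ) < x := by nlinarith
      exact ⟨h4, h3⟩
    · exfalso
      push_neg at hx
      have : Km m x = 0 := Nat.floor_eq_zero.2 (by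
        have : x / ((m:ℝ)+1) ≤ 0 := div_nonpos_of_nonpos_of_nonneg (le_of_lt hx) (le_of_lt hm)
        linarith)
      omega

lemma S1_eq_sum (x : ℝ) : S1 x = ∑ m ∈ Finset.range ⌈x⌉₊, cK (Km m x) := by
  unfold S1 Pset
  rw [Finset.sum_filter, Finset.sum_product]
  refine Finset.sum_congr rfl (fun m _ => ?_)
  rw [← Finset.sum_filter, filter_inner_eq m x, sum_sq_eq]

lemma Km_eq_zero_of_le (m : ℕ) (x : ℝ) (h : x ≤ (m : ℝ)) : Km m x = 0 := by
  apply Nat.floor_eq_zero.2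
  have hm : (0:ℝ) < (m:ℝ) + 1 := by positivity
  rw [div_lt_one hm]
  linarith

lemma S1_eq_tsum (x : ℝ) : S1 x = ∑' m : ℕ, cK (Km m x) := by
  rw [S1_eq_sum]
  symm
  apply tsum_eq_sum
  intro m hm
  rw [Finset.mem_range, not_lt] at hm
  rw [Km_eq_zero_of_le m x (le_trans (Nat.ceil_le.1 hm) (le_refl _))]
  · simp [cK]

end AuxDefs

noncomputable section Limits
open Filter Topology Finset

lemma summable_B : Summable (fun m : ℕ => 1 / ((m : ℝ) + 1) ^ 3) := by
  have h : Summable (fun n : ℕ => 1 / (n : ℝ) ^ 3) :=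
    Real.summable_one_div_nat_pow.2 (by norm_num)
  have := (summable_nat_add_iff 1).2 h
  apply this.congr
  intro n
  push_cast
  ring_nf

lemma cK_le_cube (K : ℕ) : cK K ≤ (K : ℝ) ^ 3 := by
  unfold cK
  rcases Nat.eq_zero_or_pos K with h | h
  · simp [h]
  · have : (1 : ℝ) ≤ (K : ℝ) := by exact_mod_cast h
    rw [div_le_iff₀ (by norm_num : (0:ℝ) < 6)]
    nlinarith [mul_nonneg (mul_nonneg (by linarith : (0:ℝ) ≤ (K:ℝ)) (by linarith : (0:ℝ) ≤ 4*(K:ℝ)+1)) (by linarith : (0:ℝ) ≤ (K:ℝ)-1)]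

lemma term_bound (m : ℕ) {x : ℝ} (hx : 1 ≤ x) :
    ‖cK (Km m x) / x ^ 3‖ ≤ 1 / ((m : ℝ) + 1) ^ 3 := by
  have hx0 : (0 : ℝ) < x := lt_of_lt_of_le one_pos hx
  have hm : (0 : ℝ) < (m : ℝ) + 1 := by positivity
  have hK : ((Km m x : ℕ) : ℝ) ≤ x / ((m : ℝ) + 1) := Nat.floor_le (by positivity)
  have h1 : cK (Km m x) ≤ (x / ((m : ℝ) + 1)) ^ 3 :=
    le_trans (cK_le_cube _) (pow_le_pow_left₀ (Nat.cast_nonneg _) hK 3)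
  rw [Real.norm_eq_abs, abs_of_nonneg (div_nonneg (cK_nonneg _) (by positivity))]
  rw [div_pow] at h1
  rw [div_le_div_iff₀ (by positivity) (by positivity)]
  calc cK (Km m x) * ((m : ℝ) + 1) ^ 3 ≤ (x ^ 3 / ((m : ℝ) + 1) ^ 3) * ((m : ℝ) + 1) ^ 3 := by
        apply mul_le_mul_of_nonneg_right h1 (by positivity)
    _ = x ^ 3 := by field_simp
    _ = 1 * x ^ 3 := by ring

lemma term_tendsto (m : ℕ) :
    Tendsto (fun x => cK (Km m x) / x ^ 3) atTop (𝓝 (1 / (3 * ((m : ℝ) + 1) ^ 3))) := by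
  set r : ℝ := (m : ℝ) + 1 with hr
  have hr0 : (0 : ℝ) < r := by positivity
  have hval : ∀ s : ℝ, (1 / r + s) ^ 3 / 3 = (1 / r + s) ^ 3 / 3 := fun _ => rfl
  have hL : Tendsto (fun x : ℝ => (1 / r - x⁻¹) ^ 3 / 3) atTop (𝓝 (1 / (3 * r ^ 3))) := by
    have h1 : Tendsto (fun x : ℝ => 1 / r - x⁻¹) atTop (𝓝 (1 / r - 0)) :=
      tendsto_const_nhds.sub tendsto_inv_atTop_zero
    have h2 := (h1.pow 3).div_const 3
    have hv : (1 / r - 0) ^ 3 / 3 = 1 / (3 * r ^ 3) := by field_simp; ring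
    rwa [hv] at h2
  have hU : Tendsto (fun x : ℝ => (1 / r + x⁻¹) ^ 3 / 3) atTop (𝓝 (1 / (3 * r ^ 3))) := by
    have h1 : Tendsto (fun x : ℝ => 1 / r + x⁻¹) atTop (𝓝 (1 / r + 0)) :=
      tendsto_const_nhds.add tendsto_inv_atTop_zero
    have h2 := (h1.pow 3).div_const 3
    have hv : (1 / r + 0) ^ 3 / 3 = 1 / (3 * r ^ 3) := by field_simp; ring
    rwa [hv] at h2
  have hsq : ∀ᶠ x : ℝ in atTop,
      (1 / r - x⁻¹) ^ 3 / 3 ≤ cK (Km m x) / x ^ 3 ∧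
        cK (Km m x) / x ^ 3 ≤ (1 / r + x⁻¹) ^ 3 / 3 := by
    filter_upwards [eventually_ge_atTop (max r 1)] with x hx
    have hx1 : (1 : ℝ) ≤ x := le_trans (le_max_right _ _) hx
    have hxr : r ≤ x := le_trans (le_max_left _ _) hx
    have hx0 : (0 : ℝ) < x := by linarith
    set K := Km m x with hKdef
    have hK1 : ((K : ℕ) : ℝ) ≤ x / r := Nat.floor_le (by positivity)
    have hK2 : x / r < ((K : ℕ) : ℝ) + 1 := Nat.lt_floor_add_one _
    have hKn : (0 : ℝ) ≤ ((K : ℕ) : ℝ) := Nat.cast_nonneg _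
    have hxr1 : (1 : ℝ) ≤ x / r := (one_le_div hr0).2 hxr
    have e1 : 1 / r - x⁻¹ = (x / r - 1) / x := by field_simp
    have e2 : 1 / r + x⁻¹ = (x / r + 1) / x := by field_simp
    have hcl : ((K : ℕ) : ℝ) ^ 3 ≤ 3 * cK K := by unfold cK; nlinarith
    have hcu : 3 * cK K ≤ (((K : ℕ) : ℝ) + 1) ^ 3 := by unfold cK; nlinarith
    constructor
    · rw [e1, div_pow, div_div, div_le_div_iff₀ (by positivity) (by positivity)]
      have h5 : (x / r - 1) ^ 3 ≤ ((K : ℕ) : ℝ) ^ 3 :=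
        pow_le_pow_left₀ (by linarith) (by linarith) 3
      nlinarith [pow_pos hx0 3]
    · rw [e2, div_pow, div_div, div_le_div_iff₀ (by positivity) (by positivity)]
      have h5 : (((K : ℕ) : ℝ) + 1) ^ 3 ≤ (x / r + 1) ^ 3 :=
        pow_le_pow_left₀ (by linarith) (by linarith) 3
      nlinarith [pow_pos hx0 3]
  exact tendsto_of_tendsto_of_tendsto_of_le_of_le' hL hU
    (hsq.mono fun x h => h.1) (hsq.mono fun x h => h.2)

lemma tendsto_S1_div : Tendsto (fun x => S1 x / x ^ 3) atTop (𝓝 (Bsum / 3)) := by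
  have hmain := tendsto_tsum_of_dominated_convergence
    (f := fun (x : ℝ) (m : ℕ) => cK (Km m x) / x ^ 3)
    (g := fun m : ℕ => 1 / (3 * ((m : ℝ) + 1) ^ 3))
    (bound := fun m : ℕ => 1 / ((m : ℝ) + 1) ^ 3)
    summable_B term_tendsto ?_
  · have hg : (fun m : ℕ => 1 / (3 * ((m : ℝ) + 1) ^ 3))
        = fun m : ℕ => (1 / ((m : ℝ) + 1) ^ 3) / 3 := by
      funext m; field_simp
    rw [hg, tsum_div_const] at hmain
    rw [show (∑' m : ℕ, 1 / ((m : ℝ) + 1) ^ 3) = Bsum from rfl] at hmain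
    apply hmain.congr
    intro x
    rw [tsum_div_const, ← S1_eq_tsum]
  · filter_upwards [eventually_ge_atTop (1 : ℝ)] with x hx
    exact fun m => term_bound m hx

end Limits

noncomputable section ErrorTerm
open Filter Topology Finset

lemma S1_symm (x : ℝ) : ∑ ν ∈ Pset x, ((ν.1 : ℝ) + 1) ^ 2 = S1 x := by
  unfold S1
  apply Finset.sum_equiv (Equiv.prodComm ℕ ℕ)
  · intro ν
    simp only [mem_Pset, Equiv.prodComm_apply, Prod.fst_swap, Prod.snd_swap]
    constructor <;> intro h <;> linarith [h, mul_comm ((ν.1:ℝ)+1) ((ν.2:ℝ)+1)]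
  · intro ν _
    simp

lemma card_Pset_le {x : ℝ} (hx : 1 ≤ x) :
    ((Pset x).card : ℝ) ≤ 8 * Real.sqrt x * x := by
  have hx0 : (0:ℝ) < x := by linarith
  have hs1 : (1:ℝ) ≤ Real.sqrt x := by
    rw [show (1:ℝ) = Real.sqrt 1 by simp]
    exact Real.sqrt_le_sqrt hx
  have hsub : Pset x ⊆ (range ⌈Real.sqrt x⌉₊ ×ˢ range ⌈x⌉₊) ∪
      (range ⌈x⌉₊ ×ˢ range ⌈Real.sqrt x⌉₊) := by
    intro ν hν
    rw [mem_Pset] at hν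
    have h1 : (0:ℝ) ≤ (ν.1:ℝ) := Nat.cast_nonneg _
    have h2 : (0:ℝ) ≤ (ν.2:ℝ) := Nat.cast_nonneg _
    rcases le_total ν.1 ν.2 with h | h
    · apply Finset.mem_union_left
      rw [Finset.mem_product, Finset.mem_range, Finset.mem_range, Nat.lt_ceil, Nat.lt_ceil]
      have hc : ((ν.1:ℝ)) ≤ (ν.2:ℝ) := by exact_mod_cast h
      have hsq : ((ν.1:ℝ)+1)^2 ≤ x := by nlinarith
      have : ((ν.1:ℝ)+1) ≤ Real.sqrt x := by
        rw [show ((ν.1:ℝ)+1) = Real.sqrt (((ν.1:ℝ)+1)^2) by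
          rw [Real.sqrt_sq (by positivity)]]
        exact Real.sqrt_le_sqrt hsq
      exact ⟨by linarith, by nlinarith⟩
    · apply Finset.mem_union_right
      rw [Finset.mem_product, Finset.mem_range, Finset.mem_range, Nat.lt_ceil, Nat.lt_ceil]
      have hc : ((ν.2:ℝ)) ≤ (ν.1:ℝ) := by exact_mod_cast h
      have hsq : ((ν.2:ℝ)+1)^2 ≤ x := by nlinarith
      have : ((ν.2:ℝ)+1) ≤ Real.sqrt x := by
        rw [show ((ν.2:ℝ)+1) = Real.sqrt (((ν.2:ℝ)+1)^2) by
          rw [Real.sqrt_sq (by positivity)]]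
        exact Real.sqrt_le_sqrt hsq
      exact ⟨by nlinarith, by linarith⟩
  have hcard : (Pset x).card ≤ 2 * (⌈Real.sqrt x⌉₊ * ⌈x⌉₊) := by
    calc (Pset x).card ≤ ((range ⌈Real.sqrt x⌉₊ ×ˢ range ⌈x⌉₊) ∪
        (range ⌈x⌉₊ ×ˢ range ⌈Real.sqrt x⌉₊)).card := Finset.card_le_card hsub
      _ ≤ (range ⌈Real.sqrt x⌉₊ ×ˢ range ⌈x⌉₊).card +
          (range ⌈x⌉₊ ×ˢ range ⌈Real.sqrt x⌉₊).card := Finset.card_union_le _ _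
      _ = 2 * (⌈Real.sqrt x⌉₊ * ⌈x⌉₊) := by
          simp [Finset.card_product, Finset.card_range]; ring
  have hceil1 : ((⌈Real.sqrt x⌉₊ : ℕ) : ℝ) ≤ 2 * Real.sqrt x := by
    have := Nat.ceil_lt_add_one (by positivity : (0:ℝ) ≤ Real.sqrt x)
    linarith
  have hceil2 : ((⌈x⌉₊ : ℕ) : ℝ) ≤ 2 * x := by
    have := Nat.ceil_lt_add_one (by positivity : (0:ℝ) ≤ x)
    linarith
  calc ((Pset x).card : ℝ) ≤ 2 * (((⌈Real.sqrt x⌉₊ : ℕ):ℝ) * ((⌈x⌉₊ : ℕ):ℝ)) := by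
        exact_mod_cast hcard
    _ ≤ 2 * ((2 * Real.sqrt x) * (2 * x)) := by
        apply mul_le_mul_of_nonneg_left _ (by norm_num)
        apply mul_le_mul hceil1 hceil2 (Nat.cast_nonneg _) (by positivity)
    _ = 8 * Real.sqrt x * x := by ring

lemma S_err {x : ℝ} (hx : 1 ≤ x) : |Sfun x - 2 * S1 x| ≤ 56 * x ^ 2 * Real.sqrt x := by
  have hx0 : (0:ℝ) < x := by linarith
  have h2 : 2 * S1 x = ∑ ν ∈ Pset x, (((ν.1:ℝ)+1)^2 + ((ν.2:ℝ)+1)^2) := by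
    rw [Finset.sum_add_distrib, S1_symm]
    unfold S1; ring
  rw [Sfun, h2, ← Finset.sum_sub_distrib]
  have hper : ∀ ν ∈ Pset x,
      |((ν.1:ℝ) + (ν.2:ℝ) + 1)^2 - (((ν.1:ℝ)+1)^2 + ((ν.2:ℝ)+1)^2)| ≤ 7 * x := by
    intro ν hν
    rw [mem_Pset] at hν
    have h1 : (0:ℝ) ≤ (ν.1:ℝ) := Nat.cast_nonneg _
    have h2 : (0:ℝ) ≤ (ν.2:ℝ) := Nat.cast_nonneg _
    rw [abs_le]
    constructor <;> nlinarith
  calc |∑ ν ∈ Pset x, (((ν.1:ℝ) + (ν.2:ℝ) + 1)^2 - (((ν.1:ℝ)+1)^2 + ((ν.2:ℝ)+1)^2))|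
      ≤ ∑ ν ∈ Pset x, |((ν.1:ℝ) + (ν.2:ℝ) + 1)^2 - (((ν.1:ℝ)+1)^2 + ((ν.2:ℝ)+1)^2)| :=
        Finset.abs_sum_le_sum_abs _ _
    _ ≤ ∑ _ν ∈ Pset x, 7 * x := Finset.sum_le_sum hper
    _ = ((Pset x).card : ℝ) * (7 * x) := by rw [Finset.sum_const, nsmul_eq_mul]
    _ ≤ (8 * Real.sqrt x * x) * (7 * x) := by
        apply mul_le_mul_of_nonneg_right (card_Pset_le hx) (by positivity)
    _ = 56 * x ^ 2 * Real.sqrt x := by ring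

lemma tendsto_S_div : Tendsto (fun x => Sfun x / x ^ 3) atTop (𝓝 (2 * Bsum / 3)) := by
  have h1 : Tendsto (fun x => 2 * (S1 x / x ^ 3)) atTop (𝓝 (2 * (Bsum / 3))) :=
    tendsto_S1_div.const_mul 2
  have h0 : Tendsto (fun x => (Sfun x - 2 * S1 x) / x ^ 3) atTop (𝓝 0) := by
    have hb : Tendsto (fun x : ℝ => 56 * x ^ (-(1/2) : ℝ)) atTop (𝓝 0) := by
      have := (tendsto_rpow_neg_atTop (by norm_num : (0:ℝ) < 1/2)).const_mul (56:ℝ)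
      simpa using this
    apply squeeze_zero_norm' _ hb
    filter_upwards [eventually_ge_atTop (1:ℝ)] with x hx
    have hx0 : (0:ℝ) < x := by linarith
    have hs0 : (0:ℝ) < Real.sqrt x := Real.sqrt_pos.2 hx0
    have hss : Real.sqrt x * Real.sqrt x = x := Real.mul_self_sqrt hx0.le
    have hrw : x ^ (-(1/2) : ℝ) = 1 / Real.sqrt x := by
      rw [Real.rpow_neg hx0.le, ← Real.sqrt_eq_rpow, one_div]
    rw [hrw, mul_one_div, Real.norm_eq_abs, abs_div,
      abs_of_nonneg (by positivity : (0:ℝ) ≤ x^3),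
      div_le_div_iff₀ (by positivity) hs0]
    have := S_err hx
    nlinarith [abs_nonneg (Sfun x - 2 * S1 x), Real.sqrt_nonneg x]
  have h := h1.add h0
  rw [add_zero] at h
  have hfun : ∀ x : ℝ, 2 * (S1 x / x ^ 3) + (Sfun x - 2 * S1 x) / x ^ 3 = Sfun x / x ^ 3 := by
    intro x
    rw [mul_div_assoc', ← add_div]
    congr 1
    ring
  have h2B : 2 * (Bsum / 3) = 2 * Bsum / 3 := by ring
  rw [h2B] at h
  exact h.congr hfun

end ErrorTerm

noncomputable section BsumBounds
open Filter Topology Finset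

lemma tail_bound :
    ∑' i : ℕ, 1 / (((i + 150 : ℕ) : ℝ) + 1) ^ 3 ≤ 1 / 45300 := by
  have hs : Summable (fun i : ℕ => 1 / (((i + 150 : ℕ) : ℝ) + 1) ^ 3) :=
    (summable_nat_add_iff (f := fun m : ℕ => 1 / ((m : ℝ) + 1) ^ 3) 150).2 summable_B
  apply Summable.tsum_le_of_sum_le hs
  intro s
  obtain ⟨n, hn⟩ := s.exists_nat_subset_range
  set h : ℕ → ℝ := fun i => 1 / (2 * ((i : ℝ) + 150) * ((i : ℝ) + 151)) with hdef
  have hkey : ∀ i : ℕ, 1 / (((i + 150 : ℕ) : ℝ) + 1) ^ 3 ≤ h i - h (i + 1) := by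
    intro i
    have h0 : (0:ℝ) ≤ (i:ℝ) := Nat.cast_nonneg i
    have e1 : (0:ℝ) < (i:ℝ) + 150 := by linarith
    have e2 : (0:ℝ) < (i:ℝ) + 151 := by linarith
    have e3 : (0:ℝ) < (i:ℝ) + 152 := by linarith
    have step1 : 1 / ((i:ℝ) + 151) ^ 3 ≤ 1 / (((i:ℝ)+150) * ((i:ℝ)+151) * ((i:ℝ)+152)) := by
      apply one_div_le_one_div_of_le (by positivity)
      nlinarith
    have step2 : 1 / (((i:ℝ)+150) * ((i:ℝ)+151) * ((i:ℝ)+152))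
        = h i - h (i + 1) := by
      simp only [hdef]
      push_cast
      rw [div_sub_div _ _ (by positivity) (by positivity)]
      rw [div_eq_div_iff (by positivity) (by positivity)]
      ring
    calc 1 / (((i + 150 : ℕ) : ℝ) + 1) ^ 3 = 1 / ((i:ℝ) + 151) ^ 3 := by push_cast; ring_nf
      _ ≤ _ := step2 ▸ step1
  calc ∑ i ∈ s, 1 / (((i + 150 : ℕ) : ℝ) + 1) ^ 3
      ≤ ∑ i ∈ range n, 1 / (((i + 150 : ℕ) : ℝ) + 1) ^ 3 :=
        Finset.sum_le_sum_of_subset_of_nonneg hn (fun _ _ _ => by positivity)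
    _ ≤ ∑ i ∈ range n, (h i - h (i + 1)) := Finset.sum_le_sum (fun i _ => hkey i)
    _ = h 0 - h n := Finset.sum_range_sub' h n
    _ ≤ h 0 := by
        have : 0 ≤ h n := by simp only [hdef]; positivity
        linarith
    _ = 1 / 45300 := by simp only [hdef]; norm_num

lemma Bsum_bounds : (1.2020 : ℝ) < Bsum ∧ Bsum < (1.2022 : ℝ) := by
  have hlow : ∑ m ∈ range 150, 1 / ((m : ℝ) + 1) ^ 3 ≤ Bsum :=
    Summable.sum_le_tsum (range 150) (fun i _ => by positivity) summable_B
  have hsplit := Summable.sum_add_tsum_nat_add (f := fun m : ℕ => 1 / ((m : ℝ) + 1) ^ 3) 150 summable_B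
  have hub : Bsum ≤ ∑ m ∈ range 150, 1 / ((m : ℝ) + 1) ^ 3 + 1 / 45300 := by
    rw [Bsum, ← hsplit]
    have := tail_bound
    linarith
  have hnum : (1.2020 : ℝ) < ∑ m ∈ range 150, 1 / ((m : ℝ) + 1) ^ 3 ∧
      (∑ m ∈ range 150, 1 / ((m : ℝ) + 1) ^ 3) < 1.20206 := by
    constructor <;> norm_num [Finset.sum_range_succ]
  refine ⟨lt_of_lt_of_le hnum.1 hlow, ?_⟩
  have := hnum.2
  have h45 : (1:ℝ)/45300 < 0.0001 := by norm_num
  linarith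

end BsumBounds

noncomputable section Main
open Filter Topology Finset

lemma Ifun_eq {p A : ℝ} (hp : 0 < p) (hA : 0 < A) :
    Ifun p A = Sfun (A ^ (-(1 / (2 * p)))) := by
  set y := A ^ (-(1 / (2 * p))) with hy
  have h2p : (0:ℝ) < 2 * p := by linarith
  have key : ∀ ν : Idx, (A * aT p ν ^ 2 ≤ 1) ↔ ν ∈ Pset y := by
    intro ν
    rw [mem_Pset]
    have h1 : (0:ℝ) ≤ (ν.1:ℝ) := Nat.cast_nonneg _
    have h2 : (0:ℝ) ≤ (ν.2:ℝ) := Nat.cast_nonneg _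
    set t : ℝ := ((ν.1:ℝ) + 1) * ((ν.2:ℝ) + 1) with ht
    have ht0 : (0:ℝ) < t := by positivity
    have haT : aT p ν ^ 2 = t ^ (2 * p) := by
      rw [aT, ← ht, ← Real.rpow_natCast (t ^ p) 2, ← Real.rpow_mul ht0.le]
      norm_num [mul_comm]
    rw [haT]
    constructor
    · intro h
      have h1' : t ^ (2 * p) ≤ A⁻¹ := by
        rw [← one_div]
        rw [le_div_iff₀ hA]
        linarith [mul_comm A (t ^ (2*p)), h]
      have h2' := Real.rpow_le_rpow (by positivity) h1'
        (le_of_lt (by positivity : (0:ℝ) < 1 / (2 * p)))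
      rw [← Real.rpow_mul ht0.le, mul_one_div_cancel (ne_of_gt h2p), Real.rpow_one,
        Real.inv_rpow hA.le, ← Real.rpow_neg hA.le] at h2'
      exact h2'
    · intro h
      have h1' : t ^ (2 * p) ≤ y ^ (2 * p) :=
        Real.rpow_le_rpow ht0.le h h2p.le
      have hy2 : y ^ (2 * p) = A⁻¹ := by
        rw [hy, ← Real.rpow_mul hA.le]
        rw [show -(1 / (2 * p)) * (2 * p) = -1 by field_simp]
        exact Real.rpow_neg_one A
      rw [hy2] at h1'
      calc A * t ^ (2 * p) ≤ A * A⁻¹ := by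
            apply mul_le_mul_of_nonneg_left h1' hA.le
        _ = 1 := mul_inv_cancel₀ (ne_of_gt hA)
  have hpt : ∀ ν : Idx, (if A * aT p ν ^ 2 ≤ 1 then sigT ν ^ 4 else 0)
      = if ν ∈ Pset y then ((ν.1:ℝ) + (ν.2:ℝ) + 1) ^ 2 else 0 := by
    intro ν
    have hs0 : (0:ℝ) < (ν.1:ℝ) + (ν.2:ℝ) + 1 := by positivity
    have hsig : sigT ν ^ 4 = ((ν.1:ℝ) + (ν.2:ℝ) + 1) ^ 2 := by
      rw [sigT, ← Real.rpow_natCast (((ν.1:ℝ) + (ν.2:ℝ) + 1) ^ ((1:ℝ)/2)) 4,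
        ← Real.rpow_mul hs0.le]
      rw [show (1:ℝ)/2 * ((4:ℕ):ℝ) = ((2:ℕ):ℝ) by norm_num, Real.rpow_natCast]
    rw [hsig]
    by_cases h : A * aT p ν ^ 2 ≤ 1
    · rw [if_pos h, if_pos ((key ν).1 h)]
    · rw [if_neg h, if_neg (fun hc => h ((key ν).2 hc))]
  rw [Ifun]
  have := tsum_congr (L := SummationFilter.unconditional Idx) hpt
  rw [this, tsum_eq_sum (s := Pset y) (fun ν hν => if_neg hν), Sfun]
  exact Finset.sum_congr rfl fun ν hν => if_pos hν

/-- For every `p > 0`, `I(A) ~ (2B/3) A^{−3/(2p)}` as `A → 0⁺`, where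
`B = Σ m^{−3}` (so `1.2020 < B < 1.2022`). -/
theorem Ifun_asymptotics (p : ℝ) (hp : 0 < p) :
    Tendsto (fun A : ℝ => A ^ (3 / (2 * p)) * Ifun p A) (𝓝[>] (0 : ℝ))
      (𝓝 (2 * Bsum / 3)) ∧
    (1.2020 : ℝ) < Bsum ∧ Bsum < (1.2022 : ℝ) := by
  refine ⟨?_, Bsum_bounds.1, Bsum_bounds.2⟩
  have h2p : (0:ℝ) < 2 * p := by linarith
  have hexp : (0:ℝ) < 1 / (2 * p) := by positivity
  have hy : Tendsto (fun A : ℝ => A ^ (-(1 / (2 * p)))) (𝓝[>] (0:ℝ)) atTop := by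
    have h1 : Tendsto (fun A : ℝ => (A⁻¹) ^ (1 / (2 * p))) (𝓝[>] (0:ℝ)) atTop :=
      (tendsto_rpow_atTop hexp).comp tendsto_inv_nhdsGT_zero
    apply h1.congr'
    filter_upwards [self_mem_nhdsWithin] with A hA
    have hA0 : (0:ℝ) < A := hA
    rw [Real.inv_rpow hA0.le, ← Real.rpow_neg hA0.le]
  have hcomp := tendsto_S_div.comp hy
  apply hcomp.congr'
  filter_upwards [self_mem_nhdsWithin] with A hA
  have hA0 : (0:ℝ) < A := hA
  rw [Function.comp_apply, Ifun_eq hp hA0]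
  have hy3 : (A ^ (-(1 / (2 * p)))) ^ (3:ℕ) = A ^ (-(3 / (2 * p))) := by
    rw [← Real.rpow_natCast (A ^ (-(1 / (2 * p)))) 3, ← Real.rpow_mul hA0.le]
    congr 1
    push_cast
    ring
  have hprod : A ^ (3 / (2 * p)) * A ^ (-(3 / (2 * p))) = 1 := by
    rw [← Real.rpow_add hA0]
    norm_num
  rw [hy3, div_eq_iff (ne_of_gt (Real.rpow_pos_of_pos hA0 _)),
    mul_comm (A ^ (3 / (2 * p))) _, mul_assoc, hprod, mul_one]

end Main
end

section
/- For every p > 0, as A → 0⁺, J₁(A) ~ (4Bp/(3(2p+3)))·A^{−3/(2p)}; that is, lim_{A→0⁺} A^{3/(2p)} J₁(A) = 4Bp/(3(2p+3)), where B = Σ_{m=1}^∞ m^{−3}. -/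
open Filter Topology

noncomputable section

/-- `J₁(A) = Σ_{ν∈Γ} σ_ν⁴ (1 − A a_ν²)₊`. -/
def J1fun (p A : ℝ) : ℝ :=
  ∑' ν : Idx, sigT ν ^ 4 * max (1 - A * aT p ν ^ 2) 0

section J1Aux
open Finset

lemma rpow_step_le (r : ℝ) (hr : 0 ≤ r) (n : ℕ) :
    (r+1) * (n:ℝ)^r ≤ ((n:ℝ)+1)^(r+1) - (n:ℝ)^(r+1) ∧
    ((n:ℝ)+1)^(r+1) - (n:ℝ)^(r+1) ≤ (r+1) * ((n:ℝ)+1)^r := by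
  have hr1 : (0:ℝ) < r + 1 := by linarith
  have hI : ∫ x in (n:ℝ)..((n:ℝ)+1), x ^ r
      = (((n:ℝ)+1)^(r+1) - (n:ℝ)^(r+1))/(r+1) :=
    integral_rpow (Or.inl (by linarith))
  have hint : IntervalIntegrable (fun x : ℝ => x ^ r) MeasureTheory.volume (n:ℝ) ((n:ℝ)+1) :=
    intervalIntegral.intervalIntegrable_rpow (Or.inl hr)
  have hle : (n:ℝ) ≤ (n:ℝ) + 1 := by linarith
  have h1 : ∫ x in (n:ℝ)..((n:ℝ)+1), (n:ℝ) ^ r ≤ ∫ x in (n:ℝ)..((n:ℝ)+1), x ^ r := by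
    apply intervalIntegral.integral_mono_on hle (intervalIntegrable_const) hint
    intro x hx
    exact Real.rpow_le_rpow (n.cast_nonneg) hx.1 hr
  have h2 : ∫ x in (n:ℝ)..((n:ℝ)+1), x ^ r ≤ ∫ x in (n:ℝ)..((n:ℝ)+1), ((n:ℝ)+1) ^ r := by
    apply intervalIntegral.integral_mono_on hle hint (intervalIntegrable_const)
    intro x hx
    exact Real.rpow_le_rpow (le_trans n.cast_nonneg hx.1) hx.2 hr
  rw [intervalIntegral.integral_const, hI] at h1 h2
  simp only [smul_eq_mul, add_sub_cancel_left, one_mul] at h1 h2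
  have h1' := (le_div_iff₀ hr1).mp h1
  have h2' := (div_le_iff₀ hr1).mp h2
  constructor <;> nlinarith [h1', h2']

lemma sum_rpow_bounds (r : ℝ) (hr : 0 ≤ r) (N : ℕ) :
    (N:ℝ)^(r+1) / (r+1) ≤ ∑ k ∈ Finset.Icc 1 N, (k:ℝ)^r ∧
    ∑ k ∈ Finset.Icc 1 N, (k:ℝ)^r ≤ ((N:ℝ)+1)^(r+1) / (r+1) := by
  have hr1 : (0:ℝ) < r + 1 := by linarith
  induction N with
  | zero =>
    simp [Real.zero_rpow (by positivity : r + 1 ≠ 0), Real.one_rpow]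
    positivity
  | succ N ih =>
    rw [Finset.sum_Icc_succ_top (Nat.one_le_iff_ne_zero.mpr (Nat.succ_ne_zero N))]
    obtain ⟨l, u⟩ := rpow_step_le r hr N
    obtain ⟨l', u'⟩ := rpow_step_le r hr (N+1)
    push_cast at *
    have i1 := (div_le_iff₀ hr1).mp ih.1
    have i2 := (le_div_iff₀ hr1).mp ih.2
    constructor
    · rw [div_le_iff₀ hr1]; nlinarith [u]
    · rw [le_div_iff₀ hr1]; nlinarith [l']

noncomputable def Psum (r t : ℝ) : ℝ := ∑ k ∈ Finset.Icc 1 ⌊1/t⌋₊, (k:ℝ)^r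

lemma tendsto_Psum (r : ℝ) (hr : 0 ≤ r) :
    Tendsto (fun t => t^(r+1) * Psum r t) (𝓝[>] (0:ℝ)) (𝓝 (1/(r+1))) := by
  have hr1 : (0:ℝ) < r + 1 := by linarith
  have hcont : ∀ s : ℝ, ContinuousAt (fun t : ℝ => (1+s*t)^(r+1) / (r+1)) 0 := by
    intro s
    apply ContinuousAt.div_const
    apply ContinuousAt.rpow_const
    · exact (continuous_const.add (continuous_const.mul continuous_id)).continuousAt
    · left; norm_num
  have hLow : Tendsto (fun t : ℝ => (1+(-1)*t)^(r+1) / (r+1)) (𝓝[>] (0:ℝ)) (𝓝 (1/(r+1))) := by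
    simpa using ((hcont (-1)).tendsto.mono_left nhdsWithin_le_nhds)
  have hHigh : Tendsto (fun t : ℝ => (1+1*t)^(r+1) / (r+1)) (𝓝[>] (0:ℝ)) (𝓝 (1/(r+1))) := by
    simpa using ((hcont 1).tendsto.mono_left nhdsWithin_le_nhds)
  apply tendsto_of_tendsto_of_tendsto_of_le_of_le' hLow hHigh
  · filter_upwards [Ioo_mem_nhdsGT_of_mem (by norm_num : (0:ℝ) ∈ Set.Ico 0 (1/2:ℝ))]
      with t ht
    obtain ⟨ht0, ht2⟩ := ht
    set N := ⌊1/t⌋₊ with hN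
    have hNlow : 1/t - 1 < (N:ℝ) := Nat.sub_one_lt_floor (1/t)
    have htN : 1 - t ≤ t * N := by
      have h := mul_lt_mul_of_pos_left hNlow ht0
      rw [mul_sub, mul_one_div, div_self (ne_of_gt ht0), mul_one] at h
      linarith
    have h1mt : (0:ℝ) ≤ 1 - t := by linarith
    calc (1+(-1)*t)^(r+1) / (r+1) ≤ (t*N)^(r+1) / (r+1) := by
          gcongr
          · linarith
          · linarith
        _ = t^(r+1) * ((N:ℝ)^(r+1) / (r+1)) := by
          rw [Real.mul_rpow ht0.le (Nat.cast_nonneg N), mul_div_assoc]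
        _ ≤ t^(r+1) * Psum r t := by
          have := (sum_rpow_bounds r hr N).1
          have hp : (0:ℝ) ≤ t^(r+1) := by positivity
          exact mul_le_mul_of_nonneg_left this hp
  · filter_upwards [Ioo_mem_nhdsGT_of_mem (by norm_num : (0:ℝ) ∈ Set.Ico 0 (1/2:ℝ))]
      with t ht
    obtain ⟨ht0, ht2⟩ := ht
    set N := ⌊1/t⌋₊ with hN
    have hNup : (N:ℝ) ≤ 1/t := Nat.floor_le (by positivity)
    have htN : t * ((N:ℝ)+1) ≤ 1 + 1*t := by
      have h := mul_le_mul_of_nonneg_left hNup ht0.le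
      rw [mul_one_div, div_self (ne_of_gt ht0)] at h
      nlinarith
    calc t^(r+1) * Psum r t ≤ t^(r+1) * (((N:ℝ)+1)^(r+1) / (r+1)) := by
          have := (sum_rpow_bounds r hr N).2
          have hp : (0:ℝ) ≤ t^(r+1) := by positivity
          exact mul_le_mul_of_nonneg_left this hp
        _ = (t*((N:ℝ)+1))^(r+1) / (r+1) := by
          rw [Real.mul_rpow ht0.le (by positivity), mul_div_assoc]
        _ ≤ (1+1*t)^(r+1) / (r+1) := by
          gcongr

noncomputable def Fone (q c : ℝ) : ℝ :=
  ∑' n : ℕ, ((n:ℝ)+1)^(2:ℝ) * max (1 - c*((n:ℝ)+1)^q) 0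

noncomputable def hone (q c : ℝ) : ℝ := c^(3/q) * Fone q c

lemma Fone_eq {q c : ℝ} (hq : 0 < q) (hc : 0 < c) :
    Fone q c = Psum 2 (c^(1/q)) - c * Psum (q+2) (c^(1/q)) := by
  set t := c^(1/q) with hts
  have ht : 0 < t := Real.rpow_pos_of_pos hc _
  have htq : t^q = c := by
    rw [hts, ← Real.rpow_mul hc.le, one_div_mul_cancel (ne_of_gt hq), Real.rpow_one]
  set N := ⌊1/t⌋₊ with hN
  have key : ∀ k : ℝ, 0 < k → (c * k^q ≤ 1 ↔ t*k ≤ 1) := by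
    intro k hk
    rw [← htq, ← Real.mul_rpow ht.le hk.le]
    constructor
    · intro h
      by_contra hcon
      push_neg at hcon
      exact absurd h (not_le.mpr (Real.one_lt_rpow hcon hq))
    · intro h
      exact Real.rpow_le_one (by positivity) h hq.le
  have hFone : Fone q c = ∑ n ∈ Finset.range N, (((n:ℝ)+1)^(2:ℝ) * (1 - c*((n:ℝ)+1)^q)) := by
    rw [Fone, tsum_eq_sum (s := Finset.range N)]
    · apply Finset.sum_congr rfl
      intro n hn
      rw [Finset.mem_range] at hn
      have hn1 : ((n:ℝ)+1) ≤ (N:ℝ) := by exact_mod_cast hn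
      have hNle : (N:ℝ) ≤ 1/t := Nat.floor_le (by positivity)
      have : t * ((n:ℝ)+1) ≤ 1 := by
        calc t * ((n:ℝ)+1) ≤ t * (1/t) := by
              apply mul_le_mul_of_nonneg_left (le_trans hn1 hNle) ht.le
          _ = 1 := by field_simp
      rw [max_eq_left (by linarith [(key ((n:ℝ)+1) (by positivity)).mpr this])]
    · intro n hn
      rw [Finset.mem_range, not_lt] at hn
      have h1 : 1/t < (N:ℝ) + 1 := Nat.lt_floor_add_one (1/t)
      have hn1 : (N:ℝ)+1 ≤ (n:ℝ)+1 := by exact_mod_cast Nat.succ_le_succ hn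
      have h2 : 1 < t * ((n:ℝ)+1) := by
        rw [← div_lt_iff₀' ht]
        calc 1/t < (N:ℝ)+1 := h1
          _ ≤ (n:ℝ)+1 := hn1
      have : ¬ (c * ((n:ℝ)+1)^q ≤ 1) := by
        rw [key ((n:ℝ)+1) (by positivity)]
        linarith
      push_neg at this
      rw [max_eq_right (by linarith), mul_zero]
  rw [hFone]
  have hsummand : ∀ n ∈ Finset.range N, ((n:ℝ)+1)^(2:ℝ) * (1 - c*((n:ℝ)+1)^q)
      = ((n:ℝ)+1)^(2:ℝ) - c * ((n:ℝ)+1)^(q+2) := by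
    intro n _
    have hpos : (0:ℝ) < (n:ℝ)+1 := by positivity
    rw [mul_sub, mul_one, Real.rpow_add hpos]
    ring
  rw [Finset.sum_congr rfl hsummand, Finset.sum_sub_distrib, ← Finset.mul_sum]
  have hre : ∀ r : ℝ, Psum r t = ∑ n ∈ Finset.range N, ((n:ℝ)+1)^r := by
    intro r
    rw [Psum, ← Finset.Ico_add_one_right_eq_Icc, Finset.sum_Ico_eq_sum_range]
    simp only [Nat.add_sub_cancel]
    apply Finset.sum_congr rfl
    intro n _
    congr 1
    push_cast
    ring
  rw [hre, hre]

lemma hone_eqG {q c : ℝ} (hq : 0 < q) (hc : 0 < c) :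
    hone q c = (c^(1/q))^((2:ℝ)+1) * Psum 2 (c^(1/q))
      - (c^(1/q))^((q+2)+1) * Psum (q+2) (c^(1/q)) := by
  set t := c^(1/q) with hts
  have ht : 0 < t := Real.rpow_pos_of_pos hc _
  have h3 : t^((2:ℝ)+1) = c^(3/q) := by
    rw [hts, ← Real.rpow_mul hc.le]
    congr 1
    field_simp
    ring
  have h4 : t^((q+2)+1) = c^(3/q) * c := by
    rw [hts, ← Real.rpow_mul hc.le, ← Real.rpow_add_one (ne_of_gt hc) (3/q)]
    congr 1
    field_simp
    ring
  rw [hone, Fone_eq hq hc, h3, h4]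
  ring

lemma hone_tendsto {q : ℝ} (hq : 0 < q) :
    Tendsto (hone q) (𝓝[>] (0:ℝ)) (𝓝 (1/3 - 1/(q+3))) := by
  have hmap : Tendsto (fun c : ℝ => c^(1/q)) (𝓝[>] (0:ℝ)) (𝓝[>] (0:ℝ)) := by
    rw [tendsto_nhdsWithin_iff]
    constructor
    · have hc : ContinuousAt (fun c : ℝ => c^(1/q)) 0 :=
        Real.continuousAt_rpow_const 0 (1/q) (Or.inr (by positivity))
      have := hc.tendsto.mono_left (nhdsWithin_le_nhds (s := Set.Ioi (0:ℝ)))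
      simpa [one_div, Real.zero_rpow (show q⁻¹ ≠ (0:ℝ) by positivity)] using this
    · filter_upwards [self_mem_nhdsWithin] with c hc
      exact Real.rpow_pos_of_pos hc _
  have hG : Tendsto (fun t : ℝ => t^((2:ℝ)+1) * Psum 2 t - t^((q+2)+1) * Psum (q+2) t)
      (𝓝[>] (0:ℝ)) (𝓝 (1/((2:ℝ)+1) - 1/((q+2)+1))) :=
    (tendsto_Psum 2 (by norm_num)).sub (tendsto_Psum (q+2) (by linarith))
  have hcomp := hG.comp hmap
  have : (1:ℝ)/((2:ℝ)+1) - 1/((q+2)+1) = 1/3 - 1/(q+3) := by norm_num; ring_nf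
  rw [this] at hcomp
  apply hcomp.congr'
  filter_upwards [self_mem_nhdsWithin] with c hc
  exact (hone_eqG hq hc).symm

lemma hone_nonneg {q c : ℝ} (hc : 0 < c) : 0 ≤ hone q c := by
  apply mul_nonneg (Real.rpow_nonneg hc.le _)
  apply tsum_nonneg
  intro n
  positivity

lemma Psum_nonneg (r t : ℝ) : 0 ≤ Psum r t :=
  Finset.sum_nonneg fun k _ => Real.rpow_nonneg (Nat.cast_nonneg k) r

lemma hone_le_three {q c : ℝ} (hq : 0 < q) (hc : 0 < c) : hone q c ≤ 3 := by
  rw [hone_eqG hq hc]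
  set t := c^(1/q) with hts
  have ht : 0 < t := Real.rpow_pos_of_pos hc _
  set N := ⌊1/t⌋₊ with hN
  have hsub : t^((2:ℝ)+1) * Psum 2 t - t^((q+2)+1) * Psum (q+2) t ≤ t^((2:ℝ)+1) * Psum 2 t := by
    have : 0 ≤ t^((q+2)+1) * Psum (q+2) t :=
      mul_nonneg (Real.rpow_nonneg ht.le _) (Psum_nonneg _ _)
    linarith
  refine le_trans hsub ?_
  rcases Nat.eq_zero_or_pos N with h0 | h1
  · rw [Psum, ← hN, h0]
    simp
  · have htle : t ≤ 1 := by
      have : (1:ℕ) ≤ ⌊1/t⌋₊ := h1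
      have h2 : (1:ℝ) ≤ 1/t := by
        exact_mod_cast le_trans (by exact_mod_cast this) (Nat.floor_le (by positivity))
      rw [le_div_iff₀ ht] at h2
      linarith
    have hNt : (N:ℝ) ≤ 1/t := Nat.floor_le (by positivity)
    have htN1 : t * ((N:ℝ)+1) ≤ 2 := by
      have := mul_le_mul_of_nonneg_left hNt ht.le
      rw [mul_one_div, div_self (ne_of_gt ht)] at this
      nlinarith
    calc t^((2:ℝ)+1) * Psum 2 t ≤ t^((2:ℝ)+1) * (((N:ℝ)+1)^((2:ℝ)+1) / ((2:ℝ)+1)) := by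
          apply mul_le_mul_of_nonneg_left (sum_rpow_bounds 2 (by norm_num) N).2
            (Real.rpow_nonneg ht.le _)
      _ = (t*((N:ℝ)+1))^((2:ℝ)+1) / 3 := by
          rw [Real.mul_rpow ht.le (by positivity)]
          norm_num [mul_div_assoc]
      _ ≤ (2:ℝ)^((2:ℝ)+1) / 3 := by
          gcongr
      _ ≤ 3 := by
          have : (2:ℝ)^((2:ℝ)+1) = 8 := by
            rw [show ((2:ℝ)+1) = ((3:ℕ):ℝ) by norm_num, Real.rpow_natCast]
            norm_num
          rw [this]; norm_num

lemma summable_cut {q A : ℝ} (hq : 0 < q) (hA : 0 < A) {f : Idx → ℝ}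
    (hf : ∀ ν : Idx, 1 ≤ A * ((((ν.1:ℝ)+1) * ((ν.2:ℝ)+1))^q) → f ν = 0) :
    Summable f := by
  set M := ⌈A^(-(1/q))⌉₊ with hM
  apply summable_of_ne_finset_zero (s := Finset.range M ×ˢ Finset.range M)
  intro ν hν
  apply hf
  rw [Finset.mem_product, not_and_or] at hν
  have hab : (M:ℝ) + 1 ≤ ((ν.1:ℝ)+1) * ((ν.2:ℝ)+1) := by
    rcases hν with h | h <;> rw [Finset.mem_range, not_lt] at h
    · have h1 : (M:ℝ) + 1 ≤ (ν.1:ℝ) + 1 := by exact_mod_cast Nat.succ_le_succ h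
      nlinarith [(Nat.cast_nonneg ν.1 : (0:ℝ) ≤ (ν.1:ℝ)), (Nat.cast_nonneg ν.2 : (0:ℝ) ≤ (ν.2:ℝ))]
    · have h1 : (M:ℝ) + 1 ≤ (ν.2:ℝ) + 1 := by exact_mod_cast Nat.succ_le_succ h
      nlinarith [(Nat.cast_nonneg ν.1 : (0:ℝ) ≤ (ν.1:ℝ)), (Nat.cast_nonneg ν.2 : (0:ℝ) ≤ (ν.2:ℝ))]
  have hT : A^(-(1/q)) < ((ν.1:ℝ)+1) * ((ν.2:ℝ)+1) :=
    lt_of_le_of_lt (Nat.le_ceil _) (by linarith)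
  have hTq : (A^(-(1/q)))^q = A⁻¹ := by
    rw [← Real.rpow_mul hA.le, neg_mul, one_div, inv_mul_cancel₀ (ne_of_gt hq),
      Real.rpow_neg_one]
  have hlt : A⁻¹ < (((ν.1:ℝ)+1) * ((ν.2:ℝ)+1))^q := by
    rw [← hTq]
    exact Real.rpow_lt_rpow (Real.rpow_nonneg hA.le _) hT hq
  have h2 := mul_lt_mul_of_pos_left hlt hA
  rw [mul_inv_cancel₀ (ne_of_gt hA)] at h2
  linarith

lemma mul_const_map {c : ℝ} (hc : 0 < c) :
    Tendsto (fun A : ℝ => A * c) (𝓝[>] (0:ℝ)) (𝓝[>] (0:ℝ)) := by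
  rw [tendsto_nhdsWithin_iff]
  constructor
  · have h : Tendsto (fun A : ℝ => A * c) (𝓝 (0:ℝ)) (𝓝 ((0:ℝ)*c)) :=
      (continuous_mul_right c).tendsto 0
    rw [zero_mul] at h
    exact h.mono_left nhdsWithin_le_nhds
  · filter_upwards [self_mem_nhdsWithin] with x hx
    exact mul_pos hx hc

lemma summable_inv_cube : Summable (fun m : ℕ => 1/((m:ℝ)+1)^3) := by
  have h := (summable_nat_add_iff (f := fun n : ℕ => 1/(n:ℝ)^3) 1).mpr
    (Real.summable_one_div_nat_pow.mpr (by norm_num))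
  apply h.congr
  intro n
  push_cast
  ring

lemma S2_tendsto {q : ℝ} (hq : 0 < q) :
    Tendsto (fun A : ℝ => A^(3/q) *
        ∑' ν : Idx, (((ν.2:ℝ)+1)^(2:ℝ)) * max (1 - A*((((ν.1:ℝ)+1)*((ν.2:ℝ)+1))^q)) 0)
      (𝓝[>] (0:ℝ)) (𝓝 ((1/3 - 1/(q+3)) * ∑' m:ℕ, 1/((m:ℝ)+1)^3)) := by
  have hTan : Tendsto (fun A : ℝ => ∑' m : ℕ, (1/((m:ℝ)+1)^3) * hone q (A*((m:ℝ)+1)^q))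
      (𝓝[>] (0:ℝ)) (𝓝 (∑' m : ℕ, (1/((m:ℝ)+1)^3) * (1/3 - 1/(q+3)))) := by
    apply tendsto_tsum_of_dominated_convergence
      (bound := fun m : ℕ => 3 * (1/((m:ℝ)+1)^3)) (summable_inv_cube.mul_left 3)
    · intro m
      exact ((hone_tendsto hq).comp (mul_const_map (by positivity))).const_mul _
    · filter_upwards [self_mem_nhdsWithin] with A hA
      intro m
      have hc : (0:ℝ) < A*((m:ℝ)+1)^q := by
        have : (0:ℝ) < ((m:ℝ)+1)^q := Real.rpow_pos_of_pos (by positivity) q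
        exact mul_pos hA this
      rw [Real.norm_eq_abs, abs_mul, abs_of_nonneg (hone_nonneg hc),
        abs_of_nonneg (by positivity : (0:ℝ) ≤ 1/((m:ℝ)+1)^3)]
      calc (1/((m:ℝ)+1)^3) * hone q (A*((m:ℝ)+1)^q)
          ≤ (1/((m:ℝ)+1)^3) * 3 :=
            mul_le_mul_of_nonneg_left (hone_le_three hq hc) (by positivity)
        _ = 3 * (1/((m:ℝ)+1)^3) := by ring
  rw [show (∑' m : ℕ, (1/((m:ℝ)+1)^3) * (1/3 - 1/(q+3)))
      = (1/3 - 1/(q+3)) * ∑' m:ℕ, 1/((m:ℝ)+1)^3 by rw [tsum_mul_right, mul_comm]] at hTan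
  apply hTan.congr'
  filter_upwards [self_mem_nhdsWithin] with A hA
  have hsum2 : Summable (fun ν : Idx =>
      (((ν.2:ℝ)+1)^(2:ℝ)) * max (1 - A*((((ν.1:ℝ)+1)*((ν.2:ℝ)+1))^q)) 0) := by
    apply summable_cut hq hA
    intro ν h
    rw [max_eq_right (by linarith), mul_zero]
  rw [Summable.tsum_prod' hsum2 hsum2.prod_factor, ← tsum_mul_left]
  apply tsum_congr
  intro m
  have hm1 : (0:ℝ) < (m:ℝ)+1 := by positivity
  have hmq : (0:ℝ) < ((m:ℝ)+1)^q := Real.rpow_pos_of_pos hm1 q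
  have hc : (0:ℝ) < A*((m:ℝ)+1)^q := mul_pos hA hmq
  have hinner : (∑' n : ℕ, (((n:ℝ)+1)^(2:ℝ)) * max (1 - A*((((m:ℝ)+1)*((n:ℝ)+1))^q)) 0)
      = Fone q (A*((m:ℝ)+1)^q) := by
    apply tsum_congr
    intro n
    congr 2
    rw [Real.mul_rpow hm1.le (by positivity : (0:ℝ) ≤ (n:ℝ)+1), mul_assoc]
  have hpow : (A*((m:ℝ)+1)^q)^(3/q) = A^(3/q) * ((m:ℝ)+1)^3 := by
    rw [Real.mul_rpow hA.le hmq.le, ← Real.rpow_mul hm1.le]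
    congr 1
    rw [show q * (3/q) = 3 by field_simp]
    rw [show (3:ℝ) = ((3:ℕ):ℝ) by norm_num, Real.rpow_natCast]
  rw [hone, hpow, hinner]
  field_simp

lemma z1_summable : Summable (fun n : ℕ => ((n:ℝ)+1)^(-(3/2):ℝ)) := by
  have h := (summable_nat_add_iff (f := fun n : ℕ => 1/(n:ℝ)^((3/2):ℝ)) 1).mpr
    (Real.summable_one_div_nat_rpow.mpr (by norm_num))
  apply h.congr
  intro n
  rw [Real.rpow_neg (by positivity), one_div]
  push_cast
  ring_nf

lemma abs_tsum_le_of_abs {α : Type*} {f g : α → ℝ} (hfa : Summable fun ν => |f ν|)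
    (hle : ∀ ν, |f ν| ≤ g ν) (hg : Summable g) : |∑' ν, f ν| ≤ ∑' ν, g ν := by
  have h1 : ‖∑' ν, f ν‖ ≤ ∑' ν, ‖f ν‖ := norm_tsum_le_tsum_norm (by simpa using hfa)
  rw [Real.norm_eq_abs] at h1
  refine le_trans h1 (le_trans (le_of_eq (tsum_congr fun ν => Real.norm_eq_abs (f ν))) ?_)
  exact Summable.tsum_le_tsum hle hfa hg

noncomputable def zsum : ℝ := ∑' ν : Idx, (((ν.1:ℝ)+1)^(-(3/2):ℝ)) * (((ν.2:ℝ)+1)^(-(3/2):ℝ))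

lemma zsum_summable : Summable
    (fun ν : Idx => (((ν.1:ℝ)+1)^(-(3/2):ℝ)) * (((ν.2:ℝ)+1)^(-(3/2):ℝ))) :=
  z1_summable.mul_of_nonneg z1_summable
    (fun n => Real.rpow_nonneg (by positivity) _) (fun n => Real.rpow_nonneg (by positivity) _)

lemma R_tendsto {q : ℝ} (hq : 0 < q) :
    Tendsto (fun A : ℝ => A^(3/q) * ∑' ν : Idx,
      (((((ν.1:ℝ)+1)+((ν.2:ℝ)+1)-1)^2 - ((ν.1:ℝ)+1)^(2:ℝ) - ((ν.2:ℝ)+1)^(2:ℝ)) *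
        max (1 - A*((((ν.1:ℝ)+1)*((ν.2:ℝ)+1))^q)) 0)) (𝓝[>] (0:ℝ)) (𝓝 0) := by
  apply squeeze_zero_norm'
    (a := fun A : ℝ => (7 * zsum) * A^(1/(2*q)))
  · filter_upwards [self_mem_nhdsWithin] with A hA
    have hA : (0:ℝ) < A := hA
    set T := A^(-(1/q)) with hTdef
    have hT : 0 < T := Real.rpow_pos_of_pos hA _
    have hTq : T^q = A⁻¹ := by
      rw [hTdef, ← Real.rpow_mul hA.le, neg_mul, one_div, inv_mul_cancel₀ (ne_of_gt hq),
        Real.rpow_neg_one]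
    have key : ∀ ν : Idx,
        |((((ν.1:ℝ)+1)+((ν.2:ℝ)+1)-1)^2 - ((ν.1:ℝ)+1)^(2:ℝ) - ((ν.2:ℝ)+1)^(2:ℝ)) *
          max (1 - A*((((ν.1:ℝ)+1)*((ν.2:ℝ)+1))^q)) 0|
        ≤ (7 * T^((5/2):ℝ)) * ((((ν.1:ℝ)+1)^(-(3/2):ℝ)) * (((ν.2:ℝ)+1)^(-(3/2):ℝ))) := by
      intro ν
      set a := ((ν.1:ℝ)+1) with hadef
      set b := ((ν.2:ℝ)+1) with hbdef
      have ha : (1:ℝ) ≤ a := by simp [hadef]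
      have hb : (1:ℝ) ≤ b := by simp [hbdef]
      have ha0 : (0:ℝ) < a := by linarith
      have hb0 : (0:ℝ) < b := by linarith
      have hab0 : (0:ℝ) < a*b := mul_pos ha0 hb0
      have ha2 : a^(2:ℝ) = a^2 := by
        rw [show (2:ℝ) = ((2:ℕ):ℝ) by norm_num, Real.rpow_natCast]
      have hb2 : b^(2:ℝ) = b^2 := by
        rw [show (2:ℝ) = ((2:ℕ):ℝ) by norm_num, Real.rpow_natCast]
      rcases le_or_gt (1 - A*((a*b)^q)) 0 with hneg | hpos
      · rw [max_eq_right hneg, mul_zero, abs_zero]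
        positivity
      · have hW1 : max (1 - A*((a*b)^q)) 0 ≤ 1 := by
          apply max_le _ zero_le_one
          have : 0 ≤ A*((a*b)^q) := by positivity
          linarith
        have hW0 : 0 ≤ max (1 - A*((a*b)^q)) 0 := le_max_right _ _
        have habT : a*b ≤ T := by
          by_contra hcon
          push_neg at hcon
          have h1 : T^q ≤ (a*b)^q := Real.rpow_le_rpow hT.le hcon.le hq.le
          rw [hTq] at h1
          have h2 := mul_le_mul_of_nonneg_left h1 hA.le
          rw [mul_inv_cancel₀ (ne_of_gt hA)] at h2
          linarith
        have hcoef : |(a+b-1)^2 - a^(2:ℝ) - b^(2:ℝ)| ≤ 7*(a*b) := by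
          rw [ha2, hb2]
          rw [abs_le]
          constructor <;> nlinarith
        have hsplit : a*b = ((a*b)^((5/2):ℝ)) * ((a*b)^(-(3/2):ℝ)) := by
          rw [← Real.rpow_add hab0]
          norm_num
        have hup : (a*b)^((5/2):ℝ) ≤ T^((5/2):ℝ) :=
          Real.rpow_le_rpow hab0.le habT (by norm_num)
        calc |((a+b-1)^2 - a^(2:ℝ) - b^(2:ℝ)) * max (1 - A*((a*b)^q)) 0|
            = |(a+b-1)^2 - a^(2:ℝ) - b^(2:ℝ)| * max (1 - A*((a*b)^q)) 0 := by
              rw [abs_mul, abs_of_nonneg hW0]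
          _ ≤ (7*(a*b)) * 1 := by
              apply mul_le_mul hcoef hW1 hW0 (by positivity)
          _ = 7 * (((a*b)^((5/2):ℝ)) * ((a*b)^(-(3/2):ℝ))) := by rw [← hsplit]; ring
          _ ≤ 7 * ((T^((5/2):ℝ)) * ((a*b)^(-(3/2):ℝ))) := by
              have h0 : (0:ℝ) ≤ (a*b)^(-(3/2):ℝ) := Real.rpow_nonneg hab0.le _
              nlinarith [hup]
          _ = (7 * T^((5/2):ℝ)) * ((a^(-(3/2):ℝ)) * (b^(-(3/2):ℝ))) := by
              rw [Real.mul_rpow ha0.le hb0.le]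
              ring
    have hsumabs : Summable (fun ν : Idx =>
        |((((ν.1:ℝ)+1)+((ν.2:ℝ)+1)-1)^2 - ((ν.1:ℝ)+1)^(2:ℝ) - ((ν.2:ℝ)+1)^(2:ℝ)) *
          max (1 - A*((((ν.1:ℝ)+1)*((ν.2:ℝ)+1))^q)) 0|) := by
      apply summable_cut hq hA
      intro ν h
      rw [max_eq_right (by linarith), mul_zero, abs_zero]
    have hbound := abs_tsum_le_of_abs hsumabs key (zsum_summable.mul_left (7 * T^((5/2):ℝ)))
    rw [tsum_mul_left] at hbound
    have hz : (∑' ν : Idx, (((ν.1:ℝ)+1)^(-(3/2):ℝ)) * (((ν.2:ℝ)+1)^(-(3/2):ℝ))) = zsum := rfl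
    rw [hz] at hbound
    rw [Real.norm_eq_abs, abs_mul, abs_of_nonneg (Real.rpow_nonneg hA.le _)]
    have hmul := mul_le_mul_of_nonneg_left hbound (Real.rpow_nonneg hA.le (3/q))
    refine le_trans hmul (le_of_eq ?_)
    have hAexp : A^(3/q) * A^(-(1/q)*(5/2)) = A^(1/(2*q)) := by
      rw [← Real.rpow_add hA]
      congr 1
      field_simp
      ring
    calc A^(3/q) * ((7*T^((5/2):ℝ))*zsum)
        = (A^(3/q) * A^(-(1/q)*(5/2))) * (7*zsum) := by
          rw [hTdef, ← Real.rpow_mul hA.le]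
          ring
      _ = 7*zsum*A^(1/(2*q)) := by rw [hAexp]; ring
  · have h0 : Tendsto (fun A : ℝ => A^(1/(2*q))) (𝓝[>] (0:ℝ)) (𝓝 0) := by
      have hc : ContinuousAt (fun A : ℝ => A^(1/(2*q))) 0 :=
        Real.continuousAt_rpow_const 0 (1/(2*q)) (Or.inr (by positivity))
      have := hc.tendsto.mono_left (nhdsWithin_le_nhds (s := Set.Ioi (0:ℝ)))
      rw [show ((0:ℝ)^(1/(2*q))) = 0 from Real.zero_rpow (by positivity)] at this
      exact this
    have := h0.const_mul (7 * zsum)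
    simpa using this

end J1Aux

/-- For every `p > 0`, `J₁(A) ~ (4Bp/(3(2p+3))) A^{−3/(2p)}` as `A → 0⁺`. -/
theorem J1fun_asymptotics (p : ℝ) (hp : 0 < p) :
    Tendsto (fun A : ℝ => A ^ (3 / (2 * p)) * J1fun p A) (𝓝[>] (0 : ℝ))
      (𝓝 (4 * Bsum * p / (3 * (2 * p + 3)))) := by
  have hq : (0:ℝ) < 2*p := by linarith
  have hW : ∀ (A : ℝ) (ν : Idx), sigT ν ^ 4 * max (1 - A * aT p ν ^ 2) 0
      = ((((ν.1:ℝ)+1)+((ν.2:ℝ)+1)-1)^2) *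
        max (1 - A*((((ν.1:ℝ)+1)*((ν.2:ℝ)+1))^(2*p))) 0 := by
    intro A ν
    have hx : (0:ℝ) < (ν.1:ℝ)+(ν.2:ℝ)+1 := by positivity
    have hy : (0:ℝ) < ((ν.1:ℝ)+1)*((ν.2:ℝ)+1) := by positivity
    have h1 : sigT ν ^ 4 = ((((ν.1:ℝ)+1)+((ν.2:ℝ)+1)-1))^2 := by
      rw [sigT, ← Real.rpow_natCast ((((ν.1:ℝ)+(ν.2:ℝ)+1))^((1:ℝ)/2)) 4,
        ← Real.rpow_mul hx.le,
        show (1:ℝ)/2*((4:ℕ):ℝ) = ((2:ℕ):ℝ) by norm_num, Real.rpow_natCast]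
      ring
    have h2 : aT p ν ^ 2 = (((ν.1:ℝ)+1)*((ν.2:ℝ)+1))^(2*p) := by
      rw [aT, ← Real.rpow_natCast ((((ν.1:ℝ)+1)*((ν.2:ℝ)+1))^p) 2, ← Real.rpow_mul hy.le]
      congr 1
      push_cast
      ring
    rw [h1, h2]
  have key : ∀ A : ℝ, 0 < A → A ^ (3/(2*p)) * J1fun p A
      = A^(3/(2*p)) * (∑' ν : Idx, (((ν.2:ℝ)+1)^(2:ℝ)) *
          max (1 - A*((((ν.1:ℝ)+1)*((ν.2:ℝ)+1))^(2*p))) 0)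
        + A^(3/(2*p)) * (∑' ν : Idx, (((ν.2:ℝ)+1)^(2:ℝ)) *
          max (1 - A*((((ν.1:ℝ)+1)*((ν.2:ℝ)+1))^(2*p))) 0)
        + A^(3/(2*p)) * (∑' ν : Idx,
          (((((ν.1:ℝ)+1)+((ν.2:ℝ)+1)-1)^2 - ((ν.1:ℝ)+1)^(2:ℝ) - ((ν.2:ℝ)+1)^(2:ℝ)) *
            max (1 - A*((((ν.1:ℝ)+1)*((ν.2:ℝ)+1))^(2*p))) 0)) := by
    intro A hA
    have hsa : Summable (fun ν : Idx => (((ν.1:ℝ)+1)^(2:ℝ)) *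
        max (1 - A*((((ν.1:ℝ)+1)*((ν.2:ℝ)+1))^(2*p))) 0) :=
      summable_cut hq hA (fun ν h => by rw [max_eq_right (by linarith), mul_zero])
    have hsb : Summable (fun ν : Idx => (((ν.2:ℝ)+1)^(2:ℝ)) *
        max (1 - A*((((ν.1:ℝ)+1)*((ν.2:ℝ)+1))^(2*p))) 0) :=
      summable_cut hq hA (fun ν h => by rw [max_eq_right (by linarith), mul_zero])
    have hsr : Summable (fun ν : Idx =>
        (((((ν.1:ℝ)+1)+((ν.2:ℝ)+1)-1)^2 - ((ν.1:ℝ)+1)^(2:ℝ) - ((ν.2:ℝ)+1)^(2:ℝ)) *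
          max (1 - A*((((ν.1:ℝ)+1)*((ν.2:ℝ)+1))^(2*p))) 0)) :=
      summable_cut hq hA (fun ν h => by rw [max_eq_right (by linarith), mul_zero])
    have hJ : J1fun p A = ∑' ν : Idx,
        ((((ν.1:ℝ)+1)^(2:ℝ)) * max (1 - A*((((ν.1:ℝ)+1)*((ν.2:ℝ)+1))^(2*p))) 0
          + ((((ν.2:ℝ)+1)^(2:ℝ)) * max (1 - A*((((ν.1:ℝ)+1)*((ν.2:ℝ)+1))^(2*p))) 0
          + (((((ν.1:ℝ)+1)+((ν.2:ℝ)+1)-1)^2 - ((ν.1:ℝ)+1)^(2:ℝ) - ((ν.2:ℝ)+1)^(2:ℝ)) *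
              max (1 - A*((((ν.1:ℝ)+1)*((ν.2:ℝ)+1))^(2*p))) 0))) := by
      rw [J1fun]
      apply tsum_congr
      intro ν
      rw [hW A ν]
      ring
    have hsym : (∑' ν : Idx, (((ν.1:ℝ)+1)^(2:ℝ)) *
        max (1 - A*((((ν.1:ℝ)+1)*((ν.2:ℝ)+1))^(2*p))) 0)
        = ∑' ν : Idx, (((ν.2:ℝ)+1)^(2:ℝ)) *
          max (1 - A*((((ν.1:ℝ)+1)*((ν.2:ℝ)+1))^(2*p))) 0 := by
      rw [← (Equiv.prodComm ℕ ℕ).tsum_eq (fun ν : Idx => (((ν.2:ℝ)+1)^(2:ℝ)) *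
        max (1 - A*((((ν.1:ℝ)+1)*((ν.2:ℝ)+1))^(2*p))) 0)]
      apply tsum_congr
      intro ν
      simp only [Equiv.prodComm_apply, Prod.swap, Prod.fst, Prod.snd]
      rw [mul_comm ((ν.2:ℝ)+1) ((ν.1:ℝ)+1)]
    rw [hJ, Summable.tsum_add hsa (hsb.add hsr), Summable.tsum_add hsb hsr, hsym]
    ring
  have h1 := S2_tendsto (q := 2*p) hq
  have h2 := R_tendsto (q := 2*p) hq
  have hsumT := (h1.add h1).add h2
  have hfinal := hsumT.congr' (by
    filter_upwards [self_mem_nhdsWithin] with A hA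
    exact (key A hA).symm)
  have hconst : (1/3 - 1/(2*p+3)) * (∑' m:ℕ, 1/((m:ℝ)+1)^3)
      + (1/3 - 1/(2*p+3)) * (∑' m:ℕ, 1/((m:ℝ)+1)^3) + 0
      = 4 * Bsum * p / (3 * (2 * p + 3)) := by
    rw [show (∑' m:ℕ, 1/((m:ℝ)+1)^3) = Bsum from rfl]
    have h3 : (2*p+3) ≠ 0 := by linarith
    field_simp
    ring
  rw [hconst] at hfinal
  exact hfinal


end
end

section
/- For every p > 0, as A → 0⁺, J₂(A) ~ (4Bp/((4p+3)(2p+3)))·A^{−3/(2p)}; that is, lim_{A→0⁺} A^{3/(2p)} J₂(A) = 4Bp/((4p+3)(2p+3)), where B = Σ_{m=1}^∞ m^{−3}. -/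
open Filter Topology

noncomputable section

/-- `J₂(A) = A Σ_{ν∈Γ} a_ν² σ_ν⁴ (1 − A a_ν²)₊`. -/
def J2fun (p A : ℝ) : ℝ :=
  A * ∑' ν : Idx, aT p ν ^ 2 * sigT ν ^ 4 * max (1 - A * aT p ν ^ 2) 0

open Finset in
lemma le_sum_rpow {q : ℝ} (hq : 0 < q) (n : ℕ) :
    (n : ℝ) ^ (q+1) / (q+1) ≤ ∑ i ∈ Finset.range n, ((i:ℝ)+1) ^ q := by
  have hmono : MonotoneOn (fun x : ℝ => x ^ q) (Set.Icc 0 (0 + (n:ℝ))) := by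
    intro x hx y hy hxy
    exact Real.rpow_le_rpow hx.1 hxy hq.le
  have h := hmono.integral_le_sum
  rw [integral_rpow (Or.inl (by linarith))] at h
  simp only [Real.zero_rpow (by positivity : q + 1 ≠ 0), zero_add, sub_zero] at h
  refine h.trans_eq ?_
  apply Finset.sum_congr rfl
  intro i _
  push_cast
  ring_nf

lemma sum_rpow_le {q : ℝ} (hq : 0 < q) (n : ℕ) :
    ∑ i ∈ Finset.range n, ((i:ℝ)+1) ^ q ≤ ((n:ℝ)+1) ^ (q+1) / (q+1) := by
  have hmono : MonotoneOn (fun x : ℝ => x ^ q) (Set.Icc 0 (0 + ((n+1 : ℕ):ℝ))) := by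
    intro x hx y hy hxy
    exact Real.rpow_le_rpow hx.1 hxy hq.le
  have h := hmono.sum_le_integral
  rw [integral_rpow (Or.inl (by linarith))] at h
  simp only [Real.zero_rpow (by positivity : q + 1 ≠ 0), zero_add, sub_zero] at h
  have hs : ∑ x ∈ Finset.range (n+1), (x:ℝ) ^ q
      = ∑ i ∈ Finset.range n, ((i:ℝ)+1) ^ q := by
    rw [Finset.sum_range_succ']
    rw [Nat.cast_zero, Real.zero_rpow hq.ne', add_zero]
    apply Finset.sum_congr rfl
    intro i _; push_cast; ring_nf
  rw [hs] at h
  refine h.trans_eq ?_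
  push_cast
  ring_nf


def Gfun (q r h : ℝ) : ℝ :=
  h ^ (q+1) * ∑' d : ℕ, ((d:ℝ)+1) ^ q * max (1 - (h * ((d:ℝ)+1)) ^ r) 0

lemma Gsupp {q r h : ℝ} (hr : 0 < r) (hh : 0 < h) :
    ∀ d ∉ Finset.range (⌈1/h⌉₊ - 1),
      ((d:ℝ)+1) ^ q * max (1 - (h * ((d:ℝ)+1)) ^ r) 0 = 0 := by
  intro d hd
  have hc1 : 1 ≤ ⌈1/h⌉₊ := Nat.one_le_ceil_iff.mpr (by positivity)
  have hd' : ⌈1/h⌉₊ ≤ d + 1 := by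
    simp only [Finset.mem_range, not_lt] at hd
    omega
  have h1 : (1:ℝ)/h ≤ (d:ℝ)+1 := by
    calc (1:ℝ)/h ≤ ⌈1/h⌉₊ := Nat.le_ceil _
    _ ≤ (d:ℝ)+1 := by exact_mod_cast hd'
  have h2 : (1:ℝ) ≤ h * ((d:ℝ)+1) := by
    rw [div_le_iff₀ hh] at h1
    linarith [h1]
  have : max (1 - (h * ((d:ℝ)+1)) ^ r) 0 = 0 := by
    apply max_eq_right
    have := Real.one_le_rpow h2 hr.le
    linarith
  rw [this, mul_zero]

lemma Gsummable {q r h : ℝ} (hr : 0 < r) (hh : 0 < h) :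
    Summable (fun d : ℕ => ((d:ℝ)+1) ^ q * max (1 - (h * ((d:ℝ)+1)) ^ r) 0) :=
  summable_of_ne_finset_zero (Gsupp hr hh)

lemma Gsum_eq {q r h : ℝ} (hq : 0 < q) (hr : 0 < r) (hh : 0 < h) :
    Gfun q r h = h ^ (q+1) * ((∑ d ∈ Finset.range (⌈1/h⌉₊ - 1), ((d:ℝ)+1) ^ q)
      - h ^ r * ∑ d ∈ Finset.range (⌈1/h⌉₊ - 1), ((d:ℝ)+1) ^ (q+r)) := by
  rw [Gfun, tsum_eq_sum (Gsupp hr hh)]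
  congr 1
  rw [Finset.mul_sum, ← Finset.sum_sub_distrib]
  apply Finset.sum_congr rfl
  intro d hd
  have hc1 : 1 ≤ ⌈1/h⌉₊ := Nat.one_le_ceil_iff.mpr (by positivity)
  have hdm : (d:ℝ) + 1 ≤ (⌈1/h⌉₊ - 1 : ℕ) := by
    rw [Finset.mem_range] at hd
    have : d + 1 ≤ ⌈1/h⌉₊ - 1 := by omega
    exact_mod_cast this
  have hm : ((⌈1/h⌉₊ - 1 : ℕ) : ℝ) < 1/h := by
    rw [← Nat.lt_ceil]; omega
  have hlt : h * ((d:ℝ)+1) < 1 := by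
    have : (d:ℝ) + 1 < 1/h := lt_of_le_of_lt hdm hm
    rw [lt_div_iff₀ hh] at this
    linarith
  have hmax : max (1 - (h * ((d:ℝ)+1)) ^ r) 0 = 1 - (h * ((d:ℝ)+1)) ^ r := by
    apply max_eq_left
    have : (h * ((d:ℝ)+1)) ^ r ≤ 1 :=
      Real.rpow_le_one (by positivity) hlt.le hr.le
    linarith
  rw [hmax, Real.mul_rpow hh.le (by positivity), mul_sub, mul_one]
  congr 1
  rw [Real.rpow_add (by positivity : (0:ℝ) < (d:ℝ)+1) q r]
  ring


lemma Gfun_nonneg {q r h : ℝ} (hh : 0 ≤ h) : 0 ≤ Gfun q r h := by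
  apply mul_nonneg (Real.rpow_nonneg hh _)
  apply tsum_nonneg
  intro d
  exact mul_nonneg (by positivity) (le_max_right _ _)

lemma Gfun_eq_zero {q r h : ℝ} (hr : 0 < r) (h1 : 1 ≤ h) : Gfun q r h = 0 := by
  rw [Gfun]
  convert mul_zero _
  convert tsum_zero with d
  have h2 : (1:ℝ) ≤ h * ((d:ℝ)+1) := by
    nlinarith [Nat.cast_nonneg (α := ℝ) d]
  have h3 := Real.one_le_rpow h2 hr.le
  have h4 : max (1 - (h * ((d:ℝ)+1)) ^ r) 0 = 0 := max_eq_right (by linarith)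
  rw [h4, mul_zero]

lemma mfacts {h : ℝ} (hh : 0 < h) :
    1 - h ≤ h * ((⌈1/h⌉₊ - 1 : ℕ) : ℝ) ∧ h * (((⌈1/h⌉₊ - 1 : ℕ) : ℝ) + 1) ≤ 1 + h := by
  have hc1 : 1 ≤ ⌈1/h⌉₊ := Nat.one_le_ceil_iff.mpr (by positivity)
  have hcast : ((⌈1/h⌉₊ - 1 : ℕ) : ℝ) = (⌈1/h⌉₊ : ℝ) - 1 := by
    push_cast [hc1]; ring
  constructor
  · have h1 : (1:ℝ)/h ≤ ⌈1/h⌉₊ := Nat.le_ceil _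
    rw [hcast]
    have := (div_le_iff₀ hh).mp h1
    nlinarith
  · have h2 : (⌈1/h⌉₊ : ℝ) < 1/h + 1 := Nat.ceil_lt_add_one (by positivity)
    rw [hcast]
    have h3 : h * (1/h + 1) = 1 + h := by field_simp
    nlinarith

lemma Gfun_bound {q r h : ℝ} (hq : 0 < q) (hr : 0 < r) (hh : 0 < h) :
    Gfun q r h ≤ 2 ^ (q+1) / (q+1) := by
  rcases le_or_gt 1 h with h1 | h1
  · rw [Gfun_eq_zero hr h1]; positivity
  · rw [Gsum_eq hq hr hh]
    set m := ⌈1/h⌉₊ - 1 with hm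
    have hb1 : (0:ℝ) ≤ h ^ r * ∑ d ∈ Finset.range m, ((d:ℝ)+1) ^ (q+r) := by
      apply mul_nonneg (by positivity)
      apply Finset.sum_nonneg; intro i _; positivity
    have hb2 : ∑ d ∈ Finset.range m, ((d:ℝ)+1) ^ q ≤ ((m:ℝ)+1) ^ (q+1) / (q+1) :=
      sum_rpow_le hq m
    have hm2 : h * ((m:ℝ)+1) ≤ 1 + h := (mfacts hh).2
    calc h ^ (q+1) * ((∑ d ∈ Finset.range m, ((d:ℝ)+1) ^ q)
          - h ^ r * ∑ d ∈ Finset.range m, ((d:ℝ)+1) ^ (q+r))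
        ≤ h ^ (q+1) * (((m:ℝ)+1) ^ (q+1) / (q+1)) := by
          apply mul_le_mul_of_nonneg_left _ (by positivity)
          linarith
      _ = (h * ((m:ℝ)+1)) ^ (q+1) / (q+1) := by
          rw [Real.mul_rpow hh.le (by positivity)]; ring
      _ ≤ 2 ^ (q+1) / (q+1) := by
          apply div_le_div_of_nonneg_right _ (by linarith)
          apply Real.rpow_le_rpow (by positivity) (by linarith) (by linarith)


-- squeeze helper: h^{q+1} * Σ_{range m} (d+1)^q between ((1-h)₊...) bounds
lemma piece_bounds {q h : ℝ} (hq : 0 < q) (hh : 0 < h) (h1 : h < 1) :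
    (1-h) ^ (q+1) / (q+1) ≤ h ^ (q+1) * ∑ d ∈ Finset.range (⌈1/h⌉₊ - 1), ((d:ℝ)+1) ^ q ∧
    h ^ (q+1) * ∑ d ∈ Finset.range (⌈1/h⌉₊ - 1), ((d:ℝ)+1) ^ q ≤ (1+h) ^ (q+1) / (q+1) := by
  set m := ⌈1/h⌉₊ - 1 with hmdef
  obtain ⟨hm1, hm2⟩ := mfacts hh
  constructor
  · have lb := le_sum_rpow hq m
    have h2 : (1-h) ^ (q+1) ≤ (h * (m:ℝ)) ^ (q+1) :=
      Real.rpow_le_rpow (by linarith) hm1 (by linarith)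
    rw [Real.mul_rpow hh.le (by positivity)] at h2
    calc (1-h) ^ (q+1) / (q+1) ≤ h ^ (q+1) * (m:ℝ) ^ (q+1) / (q+1) := by
          apply div_le_div_of_nonneg_right h2 (by linarith)
      _ ≤ h ^ (q+1) * ∑ d ∈ Finset.range m, ((d:ℝ)+1) ^ q := by
          rw [mul_div_assoc]
          exact mul_le_mul_of_nonneg_left lb (by positivity)
  · have ub := sum_rpow_le hq m
    have h2 : (h * ((m:ℝ)+1)) ^ (q+1) ≤ (1+h) ^ (q+1) :=
      Real.rpow_le_rpow (by positivity) hm2 (by linarith)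
    rw [Real.mul_rpow hh.le (by positivity)] at h2
    calc h ^ (q+1) * ∑ d ∈ Finset.range m, ((d:ℝ)+1) ^ q
        ≤ h ^ (q+1) * (((m:ℝ)+1) ^ (q+1) / (q+1)) :=
          mul_le_mul_of_nonneg_left ub (by positivity)
      _ = h ^ (q+1) * ((m:ℝ)+1) ^ (q+1) / (q+1) := by ring
      _ ≤ (1+h) ^ (q+1) / (q+1) := div_le_div_of_nonneg_right h2 (by linarith)

lemma one_pm_tendsto (s : ℝ) (c : ℝ) :
    Tendsto (fun h : ℝ => (1 + c*h) ^ s) (𝓝[>] (0:ℝ)) (𝓝 1) := by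
  have h1 : Tendsto (fun h : ℝ => 1 + c*h) (𝓝[>] (0:ℝ)) (𝓝 1) := by
    have hcont : Continuous (fun h : ℝ => 1 + c*h) := by continuity
    have : Tendsto (fun h : ℝ => 1 + c*h) (𝓝 (0:ℝ)) (𝓝 1) := by
      simpa using hcont.tendsto 0
    exact this.mono_left nhdsWithin_le_nhds
  have h2 : ContinuousAt (fun x : ℝ => x ^ s) 1 :=
    Real.continuousAt_rpow_const 1 s (Or.inl one_ne_zero)
  have := h2.tendsto.comp h1
  simpa [Function.comp_def] using this

lemma Gfun_tendsto {q r : ℝ} (hq : 0 < q) (hr : 0 < r) :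
    Tendsto (Gfun q r) (𝓝[>] (0:ℝ)) (𝓝 (1/(q+1) - 1/(q+r+1))) := by
  have hqr : 0 < q + r := by linarith
  -- lower and upper bounding functions
  set lo : ℝ → ℝ := fun h => (1-h) ^ (q+1) / (q+1) - (1+h) ^ (q+r+1) / (q+r+1) with hlo
  set hi : ℝ → ℝ := fun h => (1+h) ^ (q+1) / (q+1) - (1-h) ^ (q+r+1) / (q+r+1) with hhi
  have hlot : Tendsto lo (𝓝[>] (0:ℝ)) (𝓝 (1/(q+1) - 1/(q+r+1))) := by
    rw [hlo]
    have a1 := (one_pm_tendsto (q+1) (-1)).div_const (q+1)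
    have a2 := (one_pm_tendsto (q+r+1) 1).div_const (q+r+1)
    have := a1.sub a2
    simp only [one_mul, neg_one_mul] at this
    convert this using 2 <;> ring_nf
  have hhit : Tendsto hi (𝓝[>] (0:ℝ)) (𝓝 (1/(q+1) - 1/(q+r+1))) := by
    rw [hhi]
    have a1 := (one_pm_tendsto (q+1) 1).div_const (q+1)
    have a2 := (one_pm_tendsto (q+r+1) (-1)).div_const (q+r+1)
    have := a1.sub a2
    simp only [one_mul, neg_one_mul] at this
    convert this using 2 <;> ring_nf
  apply tendsto_of_tendsto_of_tendsto_of_le_of_le' hlot hhit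
  · filter_upwards [Ioo_mem_nhdsGT_of_mem (Set.mem_Ico.mpr ⟨le_refl 0, one_pos⟩)] with h hmem
    obtain ⟨hh, h1⟩ := hmem
    rw [Gsum_eq hq hr hh, mul_sub]
    have p1 := (piece_bounds hq hh h1).1
    have p2u : h ^ (q+1) * (h ^ r * ∑ d ∈ Finset.range (⌈1/h⌉₊ - 1), ((d:ℝ)+1) ^ (q+r))
        ≤ (1+h) ^ (q+r+1) / (q+r+1) := by
      have e : h ^ (q+1) * h ^ r = h ^ (q+r+1) := by
        rw [← Real.rpow_add hh]; ring_nf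
      rw [← mul_assoc, e]
      have := (piece_bounds hqr hh h1).2
      convert this using 3 <;> ring_nf
    rw [hlo]
    dsimp only
    linarith
  · filter_upwards [Ioo_mem_nhdsGT_of_mem (Set.mem_Ico.mpr ⟨le_refl 0, one_pos⟩)] with h hmem
    obtain ⟨hh, h1⟩ := hmem
    rw [Gsum_eq hq hr hh, mul_sub]
    have p1 := (piece_bounds hq hh h1).2
    have p2l : (1-h) ^ (q+r+1) / (q+r+1)
        ≤ h ^ (q+1) * (h ^ r * ∑ d ∈ Finset.range (⌈1/h⌉₊ - 1), ((d:ℝ)+1) ^ (q+r)) := by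
      have e : h ^ (q+1) * h ^ r = h ^ (q+r+1) := by
        rw [← Real.rpow_add hh]; ring_nf
      rw [← mul_assoc, e]
      have := (piece_bounds hqr hh h1).1
      convert this using 3 <;> ring_nf
    rw [hhi]
    dsimp only
    linarith


def wt (p A : ℝ) (j l : ℕ) : ℝ := max (1 - A * (((j:ℝ)+1) * ((l:ℝ)+1)) ^ (2*p)) 0
def P1 (p A : ℝ) (j l : ℕ) : ℝ :=
  A ^ ((2*p+3)/(2*p)) * ((j:ℝ)+1) ^ (2*p) * ((l:ℝ)+1) ^ (2*p+2) * wt p A j l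
def PR (p A : ℝ) (j l : ℕ) : ℝ :=
  A ^ ((2*p+3)/(2*p)) * (((j:ℝ)+1)*((l:ℝ)+1)) ^ (2*p) * (2*(j:ℝ)*(l:ℝ) - 1) * wt p A j l

lemma aT_sq (p : ℝ) (j l : ℕ) :
    aT p (j,l) ^ 2 = (((j:ℝ)+1) * ((l:ℝ)+1)) ^ (2*p) := by
  have hu : (0:ℝ) ≤ ((j:ℝ)+1) * ((l:ℝ)+1) := by positivity
  rw [aT, ← Real.rpow_natCast ((((j:ℝ)+1) * ((l:ℝ)+1)) ^ p) 2, ← Real.rpow_mul hu]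
  norm_num
  congr 1
  ring

lemma sigT_four (j l : ℕ) : sigT (j,l) ^ 4 = ((j:ℝ)+(l:ℝ)+1) ^ 2 := by
  have hy : (0:ℝ) ≤ (j:ℝ)+(l:ℝ)+1 := by positivity
  rw [sigT, ← Real.rpow_natCast (((j:ℝ)+(l:ℝ)+1) ^ ((1:ℝ)/2)) 4, ← Real.rpow_mul hy,
    ← Real.rpow_natCast ((j:ℝ)+(l:ℝ)+1) 2]
  norm_num

lemma wt_comm (p A : ℝ) (j l : ℕ) : wt p A l j = wt p A j l := by
  rw [wt, wt, mul_comm ((l:ℝ)+1)]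

lemma wt_ne {p A : ℝ} (hp : 0 < p) (hA : 0 < A) {j l : ℕ}
    (h : wt p A j l ≠ 0) : (j:ℝ) < (1/A) ^ (1/(2*p)) ∧ (l:ℝ) < (1/A) ^ (1/(2*p)) := by
  have hpos : 0 < 1 - A * (((j:ℝ)+1) * ((l:ℝ)+1)) ^ (2*p) := by
    by_contra hc
    exact h (max_eq_right (by linarith))
  have hkey : ∀ k m : ℕ, A * (((k:ℝ)+1) * ((m:ℝ)+1)) ^ (2*p) < 1 → (k:ℝ) < (1/A) ^ (1/(2*p)) := by
    intro k m hkm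
    have h1 : ((k:ℝ)+1) ^ (2*p) ≤ (((k:ℝ)+1) * ((m:ℝ)+1)) ^ (2*p) := by
      apply Real.rpow_le_rpow (by positivity) _ (by positivity)
      nlinarith [Nat.cast_nonneg (α := ℝ) k, Nat.cast_nonneg (α := ℝ) m]
    have h2 : ((k:ℝ)+1) ^ (2*p) < 1/A := by
      rw [lt_div_iff₀ hA]; nlinarith
    have h3 : (((k:ℝ)+1) ^ (2*p)) ^ (1/(2*p)) < (1/A) ^ (1/(2*p)) := by
      apply Real.rpow_lt_rpow (by positivity) h2 (by positivity)
    rw [← Real.rpow_mul (by positivity)] at h3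
    rw [show (2*p) * (1/(2*p)) = 1 by field_simp, Real.rpow_one] at h3
    linarith
  have hsym : A * (((l:ℝ)+1) * ((j:ℝ)+1)) ^ (2*p) < 1 := by
    rw [mul_comm ((l:ℝ)+1)]; linarith
  exact ⟨hkey j l (by linarith), hkey l j hsym⟩

lemma summable_wt {p A : ℝ} (hp : 0 < p) (hA : 0 < A) (g : ℕ → ℕ → ℝ) :
    Summable (fun ν : Idx => g ν.1 ν.2 * wt p A ν.1 ν.2) := by
  set N := ⌈(1/A) ^ (1/(2*p))⌉₊ with hN
  apply summable_of_ne_finset_zero (s := Finset.range N ×ˢ Finset.range N)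
  intro ν hν
  rcases eq_or_ne (wt p A ν.1 ν.2) 0 with hz | hz
  · rw [hz, mul_zero]
  · exfalso
    obtain ⟨h1, h2⟩ := wt_ne hp hA hz
    exact hν (Finset.mem_product.mpr ⟨Finset.mem_range.mpr (Nat.lt_ceil.mpr h1),
      Finset.mem_range.mpr (Nat.lt_ceil.mpr h2)⟩)

lemma summable_wt_inner {p A : ℝ} (hp : 0 < p) (hA : 0 < A) (g : ℕ → ℝ) (j : ℕ) :
    Summable (fun l : ℕ => g l * wt p A j l) := by
  set N := ⌈(1/A) ^ (1/(2*p))⌉₊ with hN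
  apply summable_of_ne_finset_zero (s := Finset.range N)
  intro l hl
  rcases eq_or_ne (wt p A j l) 0 with hz | hz
  · rw [hz, mul_zero]
  · exact absurd (Finset.mem_range.mpr (Nat.lt_ceil.mpr (wt_ne hp hA hz).2)) hl

lemma decomp {p : ℝ} (hp : 0 < p) (A : ℝ) (hA : 0 < A) (j l : ℕ) :
    A ^ (3/(2*p)) * (A * (aT p (j,l) ^ 2 * sigT (j,l) ^ 4 * max (1 - A * aT p (j,l) ^ 2) 0))
      = P1 p A j l + P1 p A l j + PR p A j l := by
  have hA1 : A ^ (3/(2*p)) * A = A ^ ((2*p+3)/(2*p)) := by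
    nth_rewrite 2 [← Real.rpow_one A]
    rw [← Real.rpow_add hA]
    congr 1
    field_simp
    ring
  have E3 : ∀ m:ℕ, ((m:ℝ)+1) ^ (2*p+2) = ((m:ℝ)+1) ^ (2*p) * ((m:ℝ)+1) ^ 2 := by
    intro m
    rw [Real.rpow_add (by positivity), ← Real.rpow_natCast ((m:ℝ)+1) 2]
    norm_num
  have Emul : (((j:ℝ)+1) * ((l:ℝ)+1)) ^ (2*p) = ((j:ℝ)+1) ^ (2*p) * ((l:ℝ)+1) ^ (2*p) :=
    Real.mul_rpow (by positivity) (by positivity)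
  have hwt : max (1 - A * (((j:ℝ)+1) * ((l:ℝ)+1)) ^ (2*p)) 0 = wt p A j l := by rw [wt]
  rw [aT_sq, sigT_four, hwt, P1, P1, PR, wt_comm, Emul, E3 l, E3 j, ← mul_assoc, hA1]
  ring


lemma wt_nonneg (p A : ℝ) (j l : ℕ) : 0 ≤ wt p A j l := le_max_right _ _

lemma wt_eq {p A : ℝ} (hp : 0 < p) (hA : 0 < A) (j l : ℕ) :
    wt p A j l = max (1 - (A ^ (1/(2*p)) * ((j:ℝ)+1) * ((l:ℝ)+1)) ^ (2*p)) 0 := by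
  have key : (A ^ (1/(2*p)) * ((j:ℝ)+1) * ((l:ℝ)+1)) ^ (2*p)
      = A * (((j:ℝ)+1) * ((l:ℝ)+1)) ^ (2*p) := by
    rw [mul_assoc, Real.mul_rpow (by positivity) (by positivity), ← Real.rpow_mul hA.le,
      show (1/(2*p))*(2*p) = 1 by field_simp, Real.rpow_one]
  rw [wt, key]

lemma inner_eq {p A : ℝ} (hp : 0 < p) (hA : 0 < A) (j : ℕ) :
    ∑' l, P1 p A j l
      = Gfun (2*p+2) (2*p) (A ^ (1/(2*p)) * ((j:ℝ)+1)) * (1/((j:ℝ)+1)^3) := by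
  set h := A ^ (1/(2*p)) * ((j:ℝ)+1) with hh
  have hstep : ∀ l:ℕ, P1 p A j l = (A ^ ((2*p+3)/(2*p)) * ((j:ℝ)+1) ^ (2*p))
      * (((l:ℝ)+1) ^ (2*p+2) * max (1 - (h * ((l:ℝ)+1)) ^ (2*p)) 0) := by
    intro l
    rw [P1, wt_eq hp hA, ← hh]
    ring
  rw [tsum_congr hstep, tsum_mul_left, Gfun]
  have e1 : h ^ (2*p+2+1) = A ^ ((2*p+3)/(2*p)) * ((j:ℝ)+1) ^ (2*p) * ((j:ℝ)+1) ^ 3 := by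
    rw [hh, Real.mul_rpow (by positivity) (by positivity), mul_assoc]
    congr 1
    · rw [← Real.rpow_mul hA.le]
      congr 1
      field_simp
      ring
    · rw [show (2*p+2+1) = 2*p + 3 by ring,
        Real.rpow_add (by positivity : (0:ℝ) < (j:ℝ)+1) (2*p) 3,
        ← Real.rpow_natCast ((j:ℝ)+1) 3]
      norm_num
  rw [e1]
  set S := ∑' d : ℕ, ((d:ℝ)+1) ^ (2*p+2) * max (1 - (h * ((d:ℝ)+1)) ^ (2*p)) 0 with hS
  have hj3 : ((j:ℝ)+1)^3 ≠ 0 := by positivity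
  field_simp

lemma r_abs {p A : ℝ} (hp : 0 < p) (hA : 0 < A) (j : ℕ) :
    |∑' l, PR p A j l|
      ≤ 3 * (A ^ (1/(2*p)) / ((j:ℝ)+1)) * Gfun (2*p+1) (2*p) (A ^ (1/(2*p)) * ((j:ℝ)+1)) := by
  set h := A ^ (1/(2*p)) * ((j:ℝ)+1) with hh
  have hhpos : 0 < h := by rw [hh]; positivity
  set C := 3 * (A ^ ((2*p+3)/(2*p)) * ((j:ℝ)+1) ^ (2*p+1)) with hC
  have habs : ∀ l:ℕ, |PR p A j l|
      ≤ C * (((l:ℝ)+1) ^ (2*p+1) * max (1 - (h * ((l:ℝ)+1)) ^ (2*p)) 0) := by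
    intro l
    have h1 : |2*(j:ℝ)*(l:ℝ) - 1| ≤ 3*(((j:ℝ)+1)*((l:ℝ)+1)) := by
      rw [abs_le]
      constructor <;> nlinarith [Nat.cast_nonneg (α:=ℝ) j, Nat.cast_nonneg (α:=ℝ) l]
    have hPR : |PR p A j l| = A ^ ((2*p+3)/(2*p)) * (((j:ℝ)+1)*((l:ℝ)+1)) ^ (2*p)
        * |2*(j:ℝ)*(l:ℝ) - 1| * wt p A j l := by
      rw [PR, abs_mul, abs_mul, abs_mul, abs_of_nonneg (by positivity : (0:ℝ) ≤ A ^ ((2*p+3)/(2*p))),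
        abs_of_nonneg (by positivity : (0:ℝ) ≤ (((j:ℝ)+1)*((l:ℝ)+1)) ^ (2*p)),
        abs_of_nonneg (wt_nonneg p A j l)]
    have e2 : A ^ ((2*p+3)/(2*p)) * (((j:ℝ)+1)*((l:ℝ)+1)) ^ (2*p)
        * (3*(((j:ℝ)+1)*((l:ℝ)+1))) * wt p A j l
        = C * (((l:ℝ)+1) ^ (2*p+1) * max (1 - (h * ((l:ℝ)+1)) ^ (2*p)) 0) := by
      rw [← wt_eq hp hA, hC,
        Real.mul_rpow (by positivity : (0:ℝ) ≤ (j:ℝ)+1) (by positivity : (0:ℝ) ≤ (l:ℝ)+1),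
        Real.rpow_add_one (by positivity : ((j:ℝ)+1) ≠ 0) (2*p),
        Real.rpow_add_one (by positivity : ((l:ℝ)+1) ≠ 0) (2*p)]
      ring
    rw [hPR]
    calc A ^ ((2*p+3)/(2*p)) * (((j:ℝ)+1)*((l:ℝ)+1)) ^ (2*p) * |2*(j:ℝ)*(l:ℝ) - 1| * wt p A j l
        ≤ A ^ ((2*p+3)/(2*p)) * (((j:ℝ)+1)*((l:ℝ)+1)) ^ (2*p)
          * (3*(((j:ℝ)+1)*((l:ℝ)+1))) * wt p A j l := by
          apply mul_le_mul_of_nonneg_right _ (wt_nonneg p A j l)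
          apply mul_le_mul_of_nonneg_left h1 (by positivity)
      _ = _ := e2
  have hsum1 : Summable (fun l => PR p A j l) := by
    apply (summable_wt_inner hp hA
      (fun l => A ^ ((2*p+3)/(2*p)) * (((j:ℝ)+1)*((l:ℝ)+1)) ^ (2*p) * (2*(j:ℝ)*(l:ℝ) - 1)) j).congr
    intro l
    rw [PR]
  have hsum2 : Summable (fun l => |PR p A j l|) := hsum1.abs
  have hsum3 : Summable (fun l:ℕ => C * (((l:ℝ)+1) ^ (2*p+1) * max (1 - (h * ((l:ℝ)+1)) ^ (2*p)) 0)) :=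
    (Gsummable (by linarith) hhpos).mul_left C
  have h3 : |∑' l, PR p A j l| ≤ ∑' l, |PR p A j l| := by
    simpa [Real.norm_eq_abs] using
      norm_tsum_le_tsum_norm (f := fun l => PR p A j l) (by simpa [Real.norm_eq_abs] using hsum2)
  have h4 : ∑' l, |PR p A j l|
      ≤ ∑' l:ℕ, C * (((l:ℝ)+1) ^ (2*p+1) * max (1 - (h * ((l:ℝ)+1)) ^ (2*p)) 0) :=
    Summable.tsum_le_tsum habs hsum2 hsum3
  have h5 : ∑' l:ℕ, C * (((l:ℝ)+1) ^ (2*p+1) * max (1 - (h * ((l:ℝ)+1)) ^ (2*p)) 0)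
      = 3 * (A ^ (1/(2*p)) / ((j:ℝ)+1)) * Gfun (2*p+1) (2*p) h := by
    rw [tsum_mul_left, Gfun, hC]
    have e3 : h ^ (2*p+1+1) = A ^ ((2*p+2)/(2*p)) * ((j:ℝ)+1) ^ (2*p+1) * ((j:ℝ)+1) := by
      rw [hh, Real.mul_rpow (by positivity) (by positivity), mul_assoc]
      congr 1
      · rw [← Real.rpow_mul hA.le]
        congr 1
        field_simp
        ring
      · rw [show (2*p+1+1) = (2*p+1) + 1 by ring,
          Real.rpow_add_one (by positivity : ((j:ℝ)+1) ≠ 0)]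
    rw [e3]
    set S := ∑' d : ℕ, ((d:ℝ)+1) ^ (2*p+1) * max (1 - (h * ((d:ℝ)+1)) ^ (2*p)) 0 with hS
    have e4 : A ^ (1/(2*p)) * A ^ ((2*p+2)/(2*p)) = A ^ ((2*p+3)/(2*p)) := by
      rw [← Real.rpow_add hA]
      congr 1
      field_simp
      ring
    have hj : ((j:ℝ)+1) ≠ 0 := by positivity
    rw [← e4]
    field_simp
  calc |∑' l, PR p A j l| ≤ ∑' l, |PR p A j l| := h3
    _ ≤ _ := h4
    _ = _ := h5


lemma summable_shift (k : ℕ) (hk : 1 < k) : Summable (fun j:ℕ => 1/((j:ℝ)+1)^k) := by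
  have h := Real.summable_one_div_nat_pow.mpr hk
  have h2 := (summable_nat_add_iff 1).mpr h
  apply h2.congr
  intro n
  push_cast
  ring

lemma tendsto_rpow0 {s : ℝ} (hs : 0 < s) :
    Tendsto (fun A : ℝ => A ^ s) (𝓝[>] (0:ℝ)) (𝓝 0) := by
  have h := (Real.continuousAt_rpow_const 0 s (Or.inr hs.le)).tendsto
  rw [Real.zero_rpow hs.ne'] at h
  exact h.mono_left nhdsWithin_le_nhds

lemma tendsto_h {p : ℝ} (hp : 0 < p) (j : ℕ) :
    Tendsto (fun A : ℝ => A ^ (1/(2*p)) * ((j:ℝ)+1)) (𝓝[>] (0:ℝ)) (𝓝[>] 0) := by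
  rw [tendsto_nhdsWithin_iff]
  constructor
  · have := (tendsto_rpow0 (show 0 < 1/(2*p) by positivity)).mul_const ((j:ℝ)+1)
    simpa using this
  · filter_upwards [self_mem_nhdsWithin] with A hA
    have : (0:ℝ) < A := hA
    exact Set.mem_Ioi.mpr (by positivity)

lemma tendsto_S1 {p : ℝ} (hp : 0 < p) :
    Tendsto (fun A : ℝ => ∑' j:ℕ,
        Gfun (2*p+2) (2*p) (A ^ (1/(2*p)) * ((j:ℝ)+1)) * (1/((j:ℝ)+1)^3))
      (𝓝[>] (0:ℝ)) (𝓝 ((1/(2*p+3) - 1/(4*p+3)) * Bsum)) := by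
  have key := tendsto_tsum_of_dominated_convergence
    (𝓕 := 𝓝[>] (0:ℝ))
    (f := fun (A : ℝ) (j : ℕ) => Gfun (2*p+2) (2*p) (A ^ (1/(2*p)) * ((j:ℝ)+1)) * (1/((j:ℝ)+1)^3))
    (g := fun (j : ℕ) => (1/(2*p+3) - 1/(4*p+3)) * (1/((j:ℝ)+1)^3))
    (bound := fun (j : ℕ) => (2 ^ (2*p+3) / (2*p+3)) * (1/((j:ℝ)+1)^3))
    ((summable_shift 3 (by norm_num)).mul_left _)
    (fun j => by
      have h1 := (Gfun_tendsto (show (0:ℝ) < 2*p+2 by linarith)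
        (show (0:ℝ) < 2*p by linarith)).comp (tendsto_h hp j)
      have h2 := h1.mul_const (1/((j:ℝ)+1)^3)
      have e : (1/(2*p+2+1) - 1/(2*p+2+(2*p)+1)) = (1/(2*p+3) - 1/(4*p+3)) := by ring_nf
      rw [e] at h2
      exact h2)
    (by
      filter_upwards [self_mem_nhdsWithin] with A hA
      intro j
      have hApos : (0:ℝ) < A := hA
      have hhpos : (0:ℝ) < A ^ (1/(2*p)) * ((j:ℝ)+1) := by positivity
      rw [Real.norm_eq_abs, abs_of_nonneg
        (mul_nonneg (Gfun_nonneg hhpos.le) (by positivity))]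
      apply mul_le_mul_of_nonneg_right _ (by positivity)
      have := Gfun_bound (show (0:ℝ) < 2*p+2 by linarith) (show (0:ℝ) < 2*p by linarith) hhpos
      calc Gfun (2*p+2) (2*p) (A ^ (1/(2*p)) * ((j:ℝ)+1)) ≤ 2 ^ (2*p+2+1)/(2*p+2+1) := this
        _ = 2 ^ (2*p+3)/(2*p+3) := by rw [show 2*p+2+1 = 2*p+3 by ring])
  have e2 : ∑' j:ℕ, (1/(2*p+3) - 1/(4*p+3)) * (1/((j:ℝ)+1)^3)
      = (1/(2*p+3) - 1/(4*p+3)) * Bsum := by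
    rw [tsum_mul_left, Bsum]
  rw [e2] at key
  exact key

lemma tendsto_SR {p : ℝ} (hp : 0 < p) :
    Tendsto (fun A : ℝ => ∑' j:ℕ, (∑' l:ℕ, PR p A j l)) (𝓝[>] (0:ℝ)) (𝓝 0) := by
  set C2 : ℝ := 2 ^ (2*p+1+1) / (2*p+1+1) with hC2
  have hC2pos : 0 < C2 := by rw [hC2]; positivity
  have key := tendsto_tsum_of_dominated_convergence
    (𝓕 := 𝓝[>] (0:ℝ))
    (f := fun (A : ℝ) (j : ℕ) => ∑' l:ℕ, PR p A j l)
    (g := fun _ : ℕ => (0:ℝ))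
    (bound := fun (j : ℕ) => (3 * C2) * (1/((j:ℝ)+1)^2))
    ((summable_shift 2 (by norm_num)).mul_left _)
    (fun j => by
      apply squeeze_zero_norm' (a := fun A : ℝ => (3 * C2 / ((j:ℝ)+1)) * A ^ (1/(2*p)))
      · filter_upwards [self_mem_nhdsWithin] with A hA
        have hApos : (0:ℝ) < A := hA
        have hhpos : (0:ℝ) < A ^ (1/(2*p)) * ((j:ℝ)+1) := by positivity
        rw [Real.norm_eq_abs]
        calc |∑' l:ℕ, PR p A j l|
            ≤ 3 * (A ^ (1/(2*p)) / ((j:ℝ)+1)) * Gfun (2*p+1) (2*p) (A ^ (1/(2*p)) * ((j:ℝ)+1)) :=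
              r_abs hp hApos j
          _ ≤ 3 * (A ^ (1/(2*p)) / ((j:ℝ)+1)) * C2 := by
              apply mul_le_mul_of_nonneg_left _ (by positivity)
              exact Gfun_bound (by linarith) (by linarith) hhpos
          _ = (3 * C2 / ((j:ℝ)+1)) * A ^ (1/(2*p)) := by ring
      · have := (tendsto_rpow0 (show 0 < 1/(2*p) by positivity)).const_mul (3 * C2 / ((j:ℝ)+1))
        simpa using this)
    (by
      filter_upwards [self_mem_nhdsWithin] with A hA
      intro j
      have hApos : (0:ℝ) < A := hA
      have hhpos : (0:ℝ) < A ^ (1/(2*p)) * ((j:ℝ)+1) := by positivity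
      rw [Real.norm_eq_abs]
      rcases le_or_gt 1 (A ^ (1/(2*p)) * ((j:ℝ)+1)) with hone | hone
      · have h0 := r_abs (p := p) (A := A) hp hApos j
        rw [Gfun_eq_zero (show (0:ℝ) < 2*p by linarith) hone, mul_zero] at h0
        calc |∑' l:ℕ, PR p A j l| ≤ 0 := h0
          _ ≤ (3 * C2) * (1/((j:ℝ)+1)^2) := by positivity
      · have hAs : A ^ (1/(2*p)) < 1 / ((j:ℝ)+1) := by
          rw [lt_div_iff₀ (by positivity : (0:ℝ) < (j:ℝ)+1)]
          linarith
        calc |∑' l:ℕ, PR p A j l|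
            ≤ 3 * (A ^ (1/(2*p)) / ((j:ℝ)+1)) * Gfun (2*p+1) (2*p) (A ^ (1/(2*p)) * ((j:ℝ)+1)) :=
              r_abs hp hApos j
          _ ≤ 3 * (A ^ (1/(2*p)) / ((j:ℝ)+1)) * C2 := by
              apply mul_le_mul_of_nonneg_left _ (by positivity)
              exact Gfun_bound (by linarith) (by linarith) hhpos
          _ ≤ 3 * ((1/((j:ℝ)+1)) / ((j:ℝ)+1)) * C2 := by
              apply mul_le_mul_of_nonneg_right _ hC2pos.le
              apply mul_le_mul_of_nonneg_left _ (by norm_num)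
              apply div_le_div_of_nonneg_right hAs.le (by positivity)
          _ = (3 * C2) * (1/((j:ℝ)+1)^2) := by
              have hj : ((j:ℝ)+1) ≠ 0 := by positivity
              field_simp)
  simpa using key


/-- For every `p > 0`, `J₂(A) ~ (4Bp/((4p+3)(2p+3))) A^{−3/(2p)}` as `A → 0⁺`. -/
theorem J2fun_asymptotics (p : ℝ) (hp : 0 < p) :
    Tendsto (fun A : ℝ => A ^ (3 / (2 * p)) * J2fun p A) (𝓝[>] (0 : ℝ))
      (𝓝 (4 * Bsum * p / ((4 * p + 3) * (2 * p + 3)))) := by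
  have hev : (fun A : ℝ =>
      (∑' j:ℕ, Gfun (2*p+2) (2*p) (A ^ (1/(2*p)) * ((j:ℝ)+1)) * (1/((j:ℝ)+1)^3))
      + (∑' j:ℕ, Gfun (2*p+2) (2*p) (A ^ (1/(2*p)) * ((j:ℝ)+1)) * (1/((j:ℝ)+1)^3))
      + (∑' j:ℕ, ∑' l:ℕ, PR p A j l))
      =ᶠ[𝓝[>] (0:ℝ)] (fun A : ℝ => A ^ (3 / (2 * p)) * J2fun p A) := by
    filter_upwards [self_mem_nhdsWithin] with A hA
    have hApos : (0:ℝ) < A := hA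
    have s1 : Summable (fun ν : Idx => P1 p A ν.1 ν.2) :=
      (summable_wt hp hApos (fun j l =>
        A ^ ((2*p+3)/(2*p)) * ((j:ℝ)+1) ^ (2*p) * ((l:ℝ)+1) ^ (2*p+2))).congr
        (fun ν => by rw [P1])
    have s2 : Summable (fun ν : Idx => P1 p A ν.2 ν.1) :=
      (summable_wt hp hApos (fun j l =>
        A ^ ((2*p+3)/(2*p)) * ((l:ℝ)+1) ^ (2*p) * ((j:ℝ)+1) ^ (2*p+2))).congr
        (fun ν => by rw [P1, wt_comm])
    have sR : Summable (fun ν : Idx => PR p A ν.1 ν.2) :=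
      (summable_wt hp hApos (fun j l =>
        A ^ ((2*p+3)/(2*p)) * (((j:ℝ)+1)*((l:ℝ)+1)) ^ (2*p) * (2*(j:ℝ)*(l:ℝ) - 1))).congr
        (fun ν => by rw [PR])
    have s1i : ∀ j, Summable (fun l => P1 p A j l) := fun j =>
      (summable_wt_inner hp hApos (fun l =>
        A ^ ((2*p+3)/(2*p)) * ((j:ℝ)+1) ^ (2*p) * ((l:ℝ)+1) ^ (2*p+2)) j).congr
        (fun l => by rw [P1])
    have s2i : ∀ j, Summable (fun l => P1 p A l j) := fun j =>
      (summable_wt_inner hp hApos (fun l =>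
        A ^ ((2*p+3)/(2*p)) * ((l:ℝ)+1) ^ (2*p) * ((j:ℝ)+1) ^ (2*p+2)) j).congr
        (fun l => by rw [P1, wt_comm])
    have sRi : ∀ j, Summable (fun l => PR p A j l) := fun j =>
      (summable_wt_inner hp hApos (fun l =>
        A ^ ((2*p+3)/(2*p)) * (((j:ℝ)+1)*((l:ℝ)+1)) ^ (2*p) * (2*(j:ℝ)*(l:ℝ) - 1)) j).congr
        (fun l => by rw [PR])
    have swap_eq : ∑' ν : Idx, P1 p A ν.2 ν.1 = ∑' ν : Idx, P1 p A ν.1 ν.2 :=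
      (Equiv.prodComm ℕ ℕ).tsum_eq (fun ν : Idx => P1 p A ν.1 ν.2)
    calc (∑' j:ℕ, Gfun (2*p+2) (2*p) (A ^ (1/(2*p)) * ((j:ℝ)+1)) * (1/((j:ℝ)+1)^3))
          + (∑' j:ℕ, Gfun (2*p+2) (2*p) (A ^ (1/(2*p)) * ((j:ℝ)+1)) * (1/((j:ℝ)+1)^3))
          + (∑' j:ℕ, ∑' l:ℕ, PR p A j l)
        = (∑' j:ℕ, ∑' l:ℕ, P1 p A j l) + (∑' j:ℕ, ∑' l:ℕ, P1 p A j l)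
          + (∑' j:ℕ, ∑' l:ℕ, PR p A j l) := by
          rw [tsum_congr (fun j => (inner_eq hp hApos j).symm)]
      _ = (∑' ν : Idx, P1 p A ν.1 ν.2) + (∑' ν : Idx, P1 p A ν.1 ν.2)
          + (∑' ν : Idx, PR p A ν.1 ν.2) := by
          rw [Summable.tsum_prod' s1 s1i, Summable.tsum_prod' sR sRi]
      _ = (∑' ν : Idx, P1 p A ν.1 ν.2) + (∑' ν : Idx, P1 p A ν.2 ν.1)
          + (∑' ν : Idx, PR p A ν.1 ν.2) := by
          rw [swap_eq]
      _ = ∑' ν : Idx, (P1 p A ν.1 ν.2 + P1 p A ν.2 ν.1 + PR p A ν.1 ν.2) := by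
          rw [Summable.tsum_add (s1.add s2) sR, Summable.tsum_add s1 s2]
      _ = ∑' ν : Idx, A ^ (3/(2*p)) * (A * (aT p ν ^ 2 * sigT ν ^ 4 * max (1 - A * aT p ν ^ 2) 0)) :=
          tsum_congr (fun ν => (decomp hp A hApos ν.1 ν.2).symm)
      _ = A ^ (3 / (2 * p)) * J2fun p A := by
          rw [J2fun, tsum_mul_left, tsum_mul_left]
  have main := ((tendsto_S1 hp).add (tendsto_S1 hp)).add (tendsto_SR hp)
  rw [add_zero] at main
  have hconst : (1/(2*p+3) - 1/(4*p+3)) * Bsum + (1/(2*p+3) - 1/(4*p+3)) * Bsum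
      = 4 * Bsum * p / ((4 * p + 3) * (2 * p + 3)) := by
    have h1 : (2*p+3) ≠ 0 := by positivity
    have h2 : (4*p+3) ≠ 0 := by positivity
    field_simp
    ring
  rw [hconst] at main
  exact main.congr' hev |>.mono_left le_rfl

end
end

section
/- Let a_ν ≥ 0 and σ_ν > 0 (ν ∈ Γ) be arbitrary sequences, r > 0, and suppose z₀ > 0 and A > 0 are such that the sequence η̃ defined by η̃_ν² = z₀² σ_ν² (1 − A a_ν²)₊ satisfies Σ_ν σ_ν² η̃_ν² = r² and Σ_ν a_ν² σ_ν² η̃_ν² = 1 (all sums finite). Then η̃ ∈ Θ(r), and η̃ minimizes Σ_ν η_ν⁴ over Θ(r): for every η ∈ Θ(r), Σ_ν η_ν⁴ ≥ Σ_ν η̃_ν⁴ = z₀⁴ Σ_ν σ_ν⁴ (1 − A a_ν²)₊² = z₀⁴ J₀(A). -/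
open Filter Topology

noncomputable section

/-- The constraint set `Θ(r) = {η ∈ l²(Γ) : Σ a²σ²η² ≤ 1, Σ σ²η² ≥ r²}`. -/
def Theta (a σ : Idx → ℝ) (r : ℝ) : Set (Idx → ℝ) :=
  {η | Summable (fun ν => η ν ^ 2) ∧
       Summable (fun ν => a ν ^ 2 * σ ν ^ 2 * η ν ^ 2) ∧
       (∑' ν, a ν ^ 2 * σ ν ^ 2 * η ν ^ 2) ≤ 1 ∧
       Summable (fun ν => σ ν ^ 2 * η ν ^ 2) ∧
       r ^ 2 ≤ ∑' ν, σ ν ^ 2 * η ν ^ 2}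

/-- If `η̃_ν² = z₀² σ_ν² (1 − A a_ν²)₊` satisfies the two constraints with equality
(`Σ σ²η̃² = r²` and `Σ a²σ²η̃² = 1`, all sums finite), then `η̃ ∈ Θ(r)` and `η̃` minimizes
`Σ η⁴` over `Θ(r)`, with minimal value `z₀⁴ Σ σ⁴(1 − A a²)₊² = z₀⁴ J₀(A)`. -/
theorem extreme_sequence_minimizes
    (a σ : Idx → ℝ) (ha : ∀ ν, 0 ≤ a ν) (hσ : ∀ ν, 0 < σ ν)
    (r z₀ A : ℝ) (hr : 0 < r) (hz : 0 < z₀) (hA : 0 < A)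
    (ηt : Idx → ℝ)
    (hηt : ∀ ν, ηt ν = z₀ * σ ν * Real.sqrt (max (1 - A * a ν ^ 2) 0))
    (hsum0 : Summable (fun ν => ηt ν ^ 2))
    (hsum4 : Summable (fun ν => ηt ν ^ 4))
    (hsum1 : Summable (fun ν => σ ν ^ 2 * ηt ν ^ 2))
    (hsum2 : Summable (fun ν => a ν ^ 2 * σ ν ^ 2 * ηt ν ^ 2))
    (heq1 : (∑' ν, σ ν ^ 2 * ηt ν ^ 2) = r ^ 2)
    (heq2 : (∑' ν, a ν ^ 2 * σ ν ^ 2 * ηt ν ^ 2) = 1) :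
    ηt ∈ Theta a σ r ∧
    (∀ η ∈ Theta a σ r, (∑' ν, ηt ν ^ 4) ≤ ∑' ν, η ν ^ 4) ∧
    (∑' ν, ηt ν ^ 4) = z₀ ^ 4 * ∑' ν, σ ν ^ 4 * (max (1 - A * a ν ^ 2) 0) ^ 2 := by
  set m : Idx → ℝ := fun ν => max (1 - A * a ν ^ 2) 0 with hm
  have hm0 : ∀ ν, 0 ≤ m ν := fun ν => le_max_right _ _
  have hηt2 : ∀ ν, ηt ν ^ 2 = z₀ ^ 2 * σ ν ^ 2 * m ν := by
    intro ν
    rw [hηt ν, mul_pow, mul_pow, Real.sq_sqrt (hm0 ν)]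
  have hηt4 : ∀ ν, ηt ν ^ 4 = z₀ ^ 4 * (σ ν ^ 4 * m ν ^ 2) := by
    intro ν
    have h : ηt ν ^ 4 = (ηt ν ^ 2) ^ 2 := by ring
    rw [h, hηt2]; ring
  have hmprod : ∀ ν, m ν ^ 2 = m ν * (1 - A * a ν ^ 2) := by
    intro ν
    rcases le_or_gt (1 - A * a ν ^ 2) 0 with h | h
    · have hz' : m ν = 0 := max_eq_right h
      simp [hz']
    · have hz' : m ν = 1 - A * a ν ^ 2 := max_eq_left h.le
      rw [hz']; ring
  have hkey : ∀ ν, ηt ν ^ 4 =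
      z₀ ^ 2 * (σ ν ^ 2 * ηt ν ^ 2 - A * (a ν ^ 2 * σ ν ^ 2 * ηt ν ^ 2)) := by
    intro ν
    rw [hηt4, hηt2, hmprod]; ring
  have hsum4val : (∑' ν, ηt ν ^ 4) = z₀ ^ 2 * (r ^ 2 - A) := by
    calc (∑' ν, ηt ν ^ 4)
        = ∑' ν, z₀ ^ 2 * (σ ν ^ 2 * ηt ν ^ 2 - A * (a ν ^ 2 * σ ν ^ 2 * ηt ν ^ 2)) :=
          tsum_congr hkey
      _ = z₀ ^ 2 * ((∑' ν, σ ν ^ 2 * ηt ν ^ 2) -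
            ∑' ν, A * (a ν ^ 2 * σ ν ^ 2 * ηt ν ^ 2)) := by
          rw [tsum_mul_left, Summable.tsum_sub hsum1 (hsum2.mul_left A)]
      _ = z₀ ^ 2 * (r ^ 2 - A) := by
          rw [heq1, tsum_mul_left, heq2]; ring
  refine ⟨⟨hsum0, hsum2, heq2.le, hsum1, heq1.ge⟩, ?_, ?_⟩
  · intro η hη
    obtain ⟨hη2, hηa, hle1, hησ, hger⟩ := hη
    -- η⁴ is summable
    have hbound : ∀ ν, η ν ^ 2 ≤ ∑' ν, η ν ^ 2 :=
      fun ν => Summable.le_tsum hη2 ν (fun b _ => sq_nonneg _)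
    have hη4 : Summable (fun ν => η ν ^ 4) := by
      refine Summable.of_nonneg_of_le (fun ν => by positivity) (fun ν => ?_)
        (hη2.mul_left (∑' ν, η ν ^ 2))
      have h : η ν ^ 4 = η ν ^ 2 * η ν ^ 2 := by ring
      rw [h]
      exact mul_le_mul_of_nonneg_right (hbound ν) (sq_nonneg _)
    -- ηt²η² is summable
    have hprod : Summable (fun ν => ηt ν ^ 2 * η ν ^ 2) := by
      refine Summable.of_nonneg_of_le (fun ν => by positivity) (fun ν => ?_)
        (hsum4.add hη4)
      nlinarith [sq_nonneg (ηt ν ^ 2 - η ν ^ 2), sq_nonneg (ηt ν * η ν)]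
    -- Step A: ∑ ηt²η² ≥ ∑ ηt⁴
    have hRHSsum : Summable (fun ν =>
        z₀ ^ 2 * (σ ν ^ 2 * η ν ^ 2 - A * (a ν ^ 2 * σ ν ^ 2 * η ν ^ 2))) :=
      ((hησ.sub (hηa.mul_left A)).mul_left (z₀ ^ 2))
    have hptA : ∀ ν, z₀ ^ 2 * (σ ν ^ 2 * η ν ^ 2 - A * (a ν ^ 2 * σ ν ^ 2 * η ν ^ 2))
        ≤ ηt ν ^ 2 * η ν ^ 2 := by
      intro ν
      rw [hηt2]
      have h1 : 1 - A * a ν ^ 2 ≤ m ν := le_max_left _ _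
      have h2 : (0:ℝ) ≤ z₀ ^ 2 * σ ν ^ 2 * η ν ^ 2 := by positivity
      nlinarith [mul_le_mul_of_nonneg_left h1 h2]
    have hA1 : z₀ ^ 2 * (r ^ 2 - A) ≤ ∑' ν, ηt ν ^ 2 * η ν ^ 2 := by
      have h1 : (∑' ν, z₀ ^ 2 * (σ ν ^ 2 * η ν ^ 2 - A * (a ν ^ 2 * σ ν ^ 2 * η ν ^ 2)))
          ≤ ∑' ν, ηt ν ^ 2 * η ν ^ 2 := Summable.tsum_le_tsum hptA hRHSsum hprod
      have h2 : (∑' ν, z₀ ^ 2 * (σ ν ^ 2 * η ν ^ 2 - A * (a ν ^ 2 * σ ν ^ 2 * η ν ^ 2)))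
          = z₀ ^ 2 * ((∑' ν, σ ν ^ 2 * η ν ^ 2) - A * ∑' ν, a ν ^ 2 * σ ν ^ 2 * η ν ^ 2) := by
        rw [tsum_mul_left, Summable.tsum_sub hησ (hηa.mul_left A), tsum_mul_left]
      have h3 : z₀ ^ 2 * (r ^ 2 - A) ≤
          z₀ ^ 2 * ((∑' ν, σ ν ^ 2 * η ν ^ 2) - A * ∑' ν, a ν ^ 2 * σ ν ^ 2 * η ν ^ 2) := by
        have hz2 : (0:ℝ) ≤ z₀ ^ 2 := sq_nonneg _
        have : r ^ 2 - A ≤ (∑' ν, σ ν ^ 2 * η ν ^ 2) - A * ∑' ν, a ν ^ 2 * σ ν ^ 2 * η ν ^ 2 := by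
          have := mul_le_mul_of_nonneg_left hle1 hA.le
          linarith [hger]
        exact mul_le_mul_of_nonneg_left this hz2
      linarith [h1, h2 ▸ h1]
    -- Step B: ∑ η⁴ ≥ 2∑ ηt²η² − ∑ ηt⁴
    have hptB : ∀ ν, 2 * (ηt ν ^ 2 * η ν ^ 2) - ηt ν ^ 4 ≤ η ν ^ 4 := by
      intro ν; nlinarith [sq_nonneg (ηt ν ^ 2 - η ν ^ 2)]
    have hB : 2 * (∑' ν, ηt ν ^ 2 * η ν ^ 2) - (∑' ν, ηt ν ^ 4) ≤ ∑' ν, η ν ^ 4 := by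
      have h1 : (∑' ν, (2 * (ηt ν ^ 2 * η ν ^ 2) - ηt ν ^ 4)) ≤ ∑' ν, η ν ^ 4 :=
        Summable.tsum_le_tsum hptB ((hprod.mul_left 2).sub hsum4) hη4
      have h2 : (∑' ν, (2 * (ηt ν ^ 2 * η ν ^ 2) - ηt ν ^ 4))
          = 2 * (∑' ν, ηt ν ^ 2 * η ν ^ 2) - (∑' ν, ηt ν ^ 4) := by
        rw [Summable.tsum_sub (hprod.mul_left 2) hsum4, tsum_mul_left]
      linarith [h2 ▸ h1]
    linarith [hA1, hB, hsum4val]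
  · calc (∑' ν, ηt ν ^ 4) = ∑' ν, z₀ ^ 4 * (σ ν ^ 4 * m ν ^ 2) := tsum_congr hηt4
      _ = z₀ ^ 4 * ∑' ν, σ ν ^ 4 * m ν ^ 2 := tsum_mul_left

end
end

section
/- Let Δ be a finite index set, let (ξ_ν)_{ν∈Δ} be i.i.d. standard Gaussian random variables, let θ_ν ∈ ℝ (ν ∈ Δ) and ε > 0. Define the likelihood ratio L = Π_{ν∈Δ} cosh(θ_ν ξ_ν / ε) · exp(−θ_ν²/(2ε²)) (this is dP_π/dP_{ε,0} for the prior π placing mass 1/2 at each of ±θ_ν independently in each coordinate). Then E[L²] = Π_{ν∈Δ} cosh(θ_ν²/ε²) ≤ exp(2 Σ_{ν∈Δ} sinh²(θ_ν²/(2ε²))). -/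
open MeasureTheory ProbabilityTheory

lemma exp_mul_gaussianPDFReal (t x : ℝ) :
    Real.exp (t * x) * gaussianPDFReal 0 1 x
      = Real.exp (t ^ 2 / 2) * gaussianPDFReal t 1 x := by
  simp only [gaussianPDFReal, NNReal.coe_one, mul_one, sub_zero]
  rw [mul_left_comm, ← Real.exp_add, mul_left_comm, ← Real.exp_add]
  congr 1
  ring

lemma integral_gaussianReal_eq (g : ℝ → ℝ) :
    ∫ x, g x ∂(gaussianReal 0 1) = ∫ x, gaussianPDFReal 0 1 x * g x := by
  rw [gaussianReal_of_var_ne_zero 0 one_ne_zero]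
  have h : gaussianPDF 0 1 = fun x => ((gaussianPDFReal 0 1 x).toNNReal : ENNReal) := rfl
  rw [h, integral_withDensity_eq_integral_smul
    (f := fun x => (gaussianPDFReal 0 1 x).toNNReal)
    ((measurable_gaussianPDFReal 0 1).real_toNNReal) g]
  congr 1
  ext x
  rw [NNReal.smul_def, smul_eq_mul, Real.coe_toNNReal _ (gaussianPDFReal_nonneg 0 1 x)]

lemma integrable_exp_mul_pdf (t : ℝ) :
    Integrable (fun x => Real.exp (t * x) * gaussianPDFReal 0 1 x) := by
  simp_rw [exp_mul_gaussianPDFReal]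
  exact (integrable_gaussianPDFReal t 1).const_mul _

lemma integral_exp_mul_pdf (t : ℝ) :
    ∫ x, Real.exp (t * x) * gaussianPDFReal 0 1 x = Real.exp (t ^ 2 / 2) := by
  simp_rw [exp_mul_gaussianPDFReal]
  rw [integral_const_mul, integral_gaussianPDFReal_eq_one t one_ne_zero, mul_one]

lemma coord_integral (a : ℝ) :
    ∫ x, (Real.cosh (a * x) * Real.exp (-(a ^ 2) / 2)) ^ 2 ∂(gaussianReal 0 1)
      = Real.cosh (a ^ 2) := by
  rw [integral_gaussianReal_eq]
  have key : ∀ x, gaussianPDFReal 0 1 x * (Real.cosh (a * x) * Real.exp (-(a ^ 2) / 2)) ^ 2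
      = (Real.exp (-(a ^ 2)) / 4) * (Real.exp (2 * a * x) * gaussianPDFReal 0 1 x)
        + ((Real.exp (-(a ^ 2)) / 4) * (Real.exp (-(2 * a) * x) * gaussianPDFReal 0 1 x)
        + (Real.exp (-(a ^ 2)) / 2) * gaussianPDFReal 0 1 x) := by
    intro x
    have hc : Real.cosh (a * x) ^ 2
        = (Real.exp (2 * a * x) + Real.exp (-(2 * a) * x) + 2) / 4 := by
      rw [Real.cosh_eq, div_pow, add_sq, pow_two, ← Real.exp_add, pow_two, ← Real.exp_add,
        mul_assoc, ← Real.exp_add]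
      rw [show a * x + a * x = 2 * a * x by ring, show a * x + -(a * x) = 0 by ring,
        show -(a * x) + -(a * x) = -(2 * a) * x by ring, Real.exp_zero]
      norm_num
      ring
    have he : Real.exp (-(a ^ 2) / 2) ^ 2 = Real.exp (-(a ^ 2)) := by
      rw [pow_two, ← Real.exp_add]
      ring_nf
    rw [mul_pow, hc, he]
    ring
  simp_rw [key]
  have h1 : Integrable (fun x => Real.exp (-(a ^ 2)) / 4
      * (Real.exp (2 * a * x) * gaussianPDFReal 0 1 x)) :=
    (integrable_exp_mul_pdf (2 * a)).const_mul _
  have h2 : Integrable (fun x => Real.exp (-(a ^ 2)) / 4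
      * (Real.exp (-(2 * a) * x) * gaussianPDFReal 0 1 x)) :=
    (integrable_exp_mul_pdf (-(2 * a))).const_mul _
  have h3 : Integrable (fun x => Real.exp (-(a ^ 2)) / 2 * gaussianPDFReal 0 1 x) :=
    (integrable_gaussianPDFReal 0 1).const_mul _
  have h23 : Integrable (fun x => Real.exp (-(a ^ 2)) / 4
      * (Real.exp (-(2 * a) * x) * gaussianPDFReal 0 1 x)
      + Real.exp (-(a ^ 2)) / 2 * gaussianPDFReal 0 1 x) := h2.add h3
  simp only [integral_add h1 h23, integral_add h2 h3,
    integral_const_mul,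
    integral_exp_mul_pdf, integral_exp_mul_pdf, integral_gaussianPDFReal_eq_one 0 one_ne_zero,
    Real.cosh_eq]
  rw [show ((2:ℝ) * a) ^ 2 / 2 = 2 * a ^ 2 by ring, show (-((2:ℝ) * a)) ^ 2 / 2 = 2 * a ^ 2 by ring]
  have hXY : Real.exp (-a ^ 2) * Real.exp (2 * a ^ 2) = Real.exp (a ^ 2) := by
    rw [← Real.exp_add]; congr 1; ring
  linear_combination hXY / 2

/-- For i.i.d. standard Gaussians `ξ_ν` (ν in a finite set Δ), the likelihood ratio
`L = Π_ν cosh(θ_ν ξ_ν/ε) exp(−θ_ν²/(2ε²))` satisfies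
`E[L²] = Π_ν cosh(θ_ν²/ε²) ≤ exp(2 Σ_ν sinh²(θ_ν²/(2ε²)))`. -/
theorem likelihood_ratio_second_moment
    {Δ : Type*} [Fintype Δ] (θ : Δ → ℝ) (ε : ℝ) (hε : 0 < ε) :
    (∫ ξ : Δ → ℝ,
        (∏ ν, Real.cosh (θ ν * ξ ν / ε) * Real.exp (-(θ ν ^ 2) / (2 * ε ^ 2))) ^ 2
        ∂(Measure.pi fun _ : Δ => gaussianReal 0 1)) =
      ∏ ν, Real.cosh (θ ν ^ 2 / ε ^ 2) ∧
    (∏ ν, Real.cosh (θ ν ^ 2 / ε ^ 2)) ≤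
      Real.exp (2 * ∑ ν, Real.sinh (θ ν ^ 2 / (2 * ε ^ 2)) ^ 2) := by
  constructor
  · have hrw : ∀ (ν : Δ) (x : ℝ),
        Real.cosh (θ ν * x / ε) * Real.exp (-(θ ν ^ 2) / (2 * ε ^ 2))
          = Real.cosh ((θ ν / ε) * x) * Real.exp (-((θ ν / ε) ^ 2) / 2) := by
      intro ν x
      congr 2
      · ring
      · rw [div_pow]
        ring
    simp_rw [hrw, ← Finset.prod_pow]
    letI : MeasureSpace ℝ := ⟨gaussianReal 0 1⟩
    haveI : SigmaFinite (volume : Measure ℝ) :=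
      inferInstanceAs (SigmaFinite (gaussianReal 0 1))
    have h := MeasureTheory.integral_fintype_prod_eq_prod (𝕜 := ℝ) (ι := Δ) (μ := fun _ => (volume : Measure ℝ))
      (fun ν x => (Real.cosh ((θ ν / ε) * x) * Real.exp (-((θ ν / ε) ^ 2) / 2)) ^ 2)
    rw [show (Measure.pi fun _ : Δ => gaussianReal 0 1) = (volume : Measure (Δ → ℝ)) from rfl]
    refine h.trans ?_
    refine Finset.prod_congr rfl fun ν _ => ?_
    rw [show (volume : Measure ℝ) = gaussianReal 0 1 from rfl, coord_integral (θ ν / ε), div_pow]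
  · calc ∏ ν, Real.cosh (θ ν ^ 2 / ε ^ 2)
        ≤ ∏ ν, Real.exp (2 * Real.sinh (θ ν ^ 2 / (2 * ε ^ 2)) ^ 2) := by
          refine Finset.prod_le_prod (fun ν _ => (Real.cosh_pos _).le) (fun ν _ => ?_)
          have h : Real.cosh (θ ν ^ 2 / ε ^ 2)
              = 1 + 2 * Real.sinh (θ ν ^ 2 / (2 * ε ^ 2)) ^ 2 := by
            rw [show θ ν ^ 2 / ε ^ 2 = 2 * (θ ν ^ 2 / (2 * ε ^ 2)) by ring,
              Real.cosh_two_mul, Real.cosh_sq]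
            ring
          rw [h]
          linarith [Real.add_one_le_exp (2 * Real.sinh (θ ν ^ 2 / (2 * ε ^ 2)) ^ 2)]
      _ = Real.exp (2 * ∑ ν, Real.sinh (θ ν ^ 2 / (2 * ε ^ 2)) ^ 2) := by
          rw [← Real.exp_sum, Finset.mul_sum]
end
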